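/- arXiv:0901.3984 — 4 statements merged into one kernel-verified Lean document; each statement's English description precedes it below -/
import Mathlib

section
/- If a set Σ of TGDs and EGDs is safely restricted, then Σ is inductively restricted. -/
set_option maxHeartbeats 1000000

namespace StopChase

/-! ## Basic objects: values, terms, relation symbols, atoms, facts -/

/-- Database values: constants from `Δ` and labeled nulls from `Δ_null`. -/
inductive Val : Type
  | const : ℕ → Val
  | null : ℕ → Val
  deriving DecidableEq

/-- `v` is a labeled null. -/
def Val.isNull : Val → Prop
  | .null _ => True
  | .const _ => False

/-- Terms: variables or constant parameters. -/
inductive Term : Type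
  | var : ℕ → Term
  | const : ℕ → Term
  deriving DecidableEq

/-- Relation symbols of a universal schema: a name together with an arity. -/
abbrev RelSym : Type := ℕ × ℕ

/-- The arity of a relation symbol. -/
def RelSym.arity (R : RelSym) : ℕ := R.2

/-- A position `R^i` of a relation symbol. -/
abbrev Pos : Type := RelSym × ℕ

/-- An atom: a relation symbol applied to a list of terms. -/
structure Atom : Type where
  rel : RelSym
  args : List Term
  deriving DecidableEq

/-- Well-formedness of an atom: the number of arguments matches the arity. -/
def Atom.wf (A : Atom) : Prop := A.args.length = A.rel.arity

/-- A fact: a relation symbol applied to a list of values. -/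
structure Fact : Type where
  rel : RelSym
  args : List Val
  deriving DecidableEq

/-- Well-formedness of a fact. -/
def Fact.wf (F : Fact) : Prop := F.args.length = F.rel.arity

/-- The variables occurring in an atom. -/
def Atom.vars (A : Atom) : Set ℕ := {v | Term.var v ∈ A.args}

/-- The variables occurring in a list of atoms. -/
def varsOf (L : List Atom) : Set ℕ := {v | ∃ A ∈ L, v ∈ A.vars}

/-- Variable `v` occurs at position `π` in the list of atoms `L`. -/
def occursAt (L : List Atom) (v : ℕ) (π : Pos) : Prop :=
  ∃ A ∈ L, A.rel = π.1 ∧ A.args[π.2]? = some (Term.var v)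

/-- The set of positions of a list of atoms. -/
def posOfAtoms (L : List Atom) : Set Pos :=
  {π | ∃ A ∈ L, A.rel = π.1 ∧ π.2 < A.args.length}

/-! ## Constraints: TGDs and EGDs -/

/-- A tuple generating dependency `∀ x̄ (φ(x̄) → ∃ ȳ ψ(x̄,ȳ))`, given by its body `φ`
and head `ψ`.  The universally quantified variables are those occurring in the body;
head variables not occurring in the body are (implicitly) existentially quantified. -/
structure TGD : Type where
  body : List Atom
  head : List Atom
  deriving DecidableEq

/-- Well-formedness of a TGD: the head is nonempty and all atoms are well-formed. -/
def TGD.wf (t : TGD) : Prop :=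
  t.head ≠ [] ∧ (∀ A ∈ t.body, A.wf) ∧ (∀ A ∈ t.head, A.wf)

/-- The universally quantified variables of a TGD. -/
def TGD.uniVars (t : TGD) : Set ℕ := varsOf t.body

/-- The existentially quantified variables of a TGD. -/
def TGD.exVars (t : TGD) : Set ℕ := varsOf t.head \ varsOf t.body

/-- An equality generating dependency `∀ x̄ (φ(x̄) → x_i = x_j)`. -/
structure EGD : Type where
  body : List Atom
  lhs : ℕ
  rhs : ℕ
  deriving DecidableEq

/-- Well-formedness of an EGD: nonempty well-formed body and both equated
variables occur in the body. -/
def EGD.wf (e : EGD) : Prop :=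
  e.body ≠ [] ∧ (∀ A ∈ e.body, A.wf) ∧ e.lhs ∈ varsOf e.body ∧ e.rhs ∈ varsOf e.body

/-- A constraint is a TGD or an EGD. -/
inductive Constraint : Type
  | tgd : TGD → Constraint
  | egd : EGD → Constraint
  deriving DecidableEq

/-- Well-formedness of a constraint. -/
def Constraint.wf : Constraint → Prop
  | .tgd t => t.wf
  | .egd e => e.wf

/-- The body atoms of a constraint. -/
def Constraint.bodyAtoms : Constraint → List Atom
  | .tgd t => t.body
  | .egd e => e.body

/-- `pos(α)`: the set of positions occurring in the body of `α`. -/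
def Constraint.pos (α : Constraint) : Set Pos := posOfAtoms α.bodyAtoms

/-- `pos(Σ)`: the set of positions occurring in the bodies of constraints of `Σ`. -/
def posOf (S : Set Constraint) : Set Pos := ⋃ α ∈ S, α.pos

/-- The universally quantified variables occurring in the head of a constraint
(for an EGD, the two equated variables). -/
def Constraint.headUniVars : Constraint → Set ℕ
  | .tgd t => varsOf t.head ∩ varsOf t.body
  | .egd e => {e.lhs, e.rhs}

/-! ## Semantics -/

/-- Evaluation of a term under an assignment `ν : V → Δ ∪ Δ_null`. -/
def Term.eval (ν : ℕ → Val) : Term → Val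
  | .var v => ν v
  | .const c => Val.const c

/-- Instantiation of an atom to a fact. -/
def Atom.inst (ν : ℕ → Val) (A : Atom) : Fact := ⟨A.rel, A.args.map (Term.eval ν)⟩

/-- All atoms of `L`, instantiated by `ν`, hold in the instance `I`. -/
def bodyHolds (I : Set Fact) (L : List Atom) (ν : ℕ → Val) : Prop :=
  ∀ A ∈ L, A.inst ν ∈ I

/-- `I ⊨ α(ā)`: the constraint `α` holds in `I` under the assignment `ν` of its
universally quantified variables. -/
def Constraint.satAt : Constraint → Set Fact → (ℕ → Val) → Prop
  | .tgd t, I, ν => bodyHolds I t.body ν →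
      ∃ ν' : ℕ → Val, (∀ v ∈ varsOf t.body, ν' v = ν v) ∧ bodyHolds I t.head ν'
  | .egd e, I, ν => bodyHolds I e.body ν → ν e.lhs = ν e.rhs

/-- `I ⊨ α`. -/
def Constraint.holds (α : Constraint) (I : Set Fact) : Prop := ∀ ν, α.satAt I ν

/-- The active domain of an instance: the set of values occurring in it. -/
def adom (I : Set Fact) : Set Val := {v | ∃ F ∈ I, v ∈ F.args}

/-- Substitution of the value `a` by the value `b`. -/
def Val.subst (a b : Val) (v : Val) : Val := if v = a then b else v

/-- Substitution applied to a fact. -/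
def Fact.substF (a b : Val) (F : Fact) : Fact := ⟨F.rel, F.args.map (Val.subst a b)⟩

/-! ## Chase steps and chase sequences -/

/-- A chase step `I →_{α,ā} J`: the instance `I` violates `α(ā)` and `J` is
obtained from `I` by adding the head atoms instantiated with fresh labeled nulls
for the existentially quantified variables (TGDs), resp. by equating a labeled
null with another value (EGDs). -/
def Constraint.chaseStep (α : Constraint) (ν : ℕ → Val) (I J : Set Fact) : Prop :=
  ¬ α.satAt I ν ∧
  match α with
  | .tgd t =>
      ∃ ν' : ℕ → Val,
        (∀ v ∈ varsOf t.body, ν' v = ν v) ∧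
        (∀ v ∈ t.exVars, (ν' v).isNull ∧ ν' v ∉ adom I) ∧
        (∀ v ∈ t.exVars, ∀ w ∈ t.exVars, ν' v = ν' w → v = w) ∧
        J = I ∪ {F | ∃ A ∈ t.head, F = A.inst ν'}
  | .egd e =>
      ∃ a b : Val, a.isNull ∧ ({a, b} : Set Val) = {ν e.lhs, ν e.rhs} ∧
        J = Fact.substF a b '' I

/-- The data of a (finite or infinite) chase sequence: the instances, and
the constraint and assignment used at each step. -/
structure ChaseData : Type where
  inst : ℕ → Set Fact
  cns : ℕ → Constraint
  asg : ℕ → ℕ → Val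

/-- `D` is a chase sequence of length (at least) `r` with constraints from `S`. -/
def ChaseData.okUpTo (D : ChaseData) (S : Set Constraint) (r : ℕ) : Prop :=
  ∀ i < r, D.cns i ∈ S ∧ (D.cns i).chaseStep (D.asg i) (D.inst i) (D.inst (i+1))

/-- `D` is an infinite chase sequence with constraints from `S`. -/
def ChaseData.okAll (D : ChaseData) (S : Set Constraint) : Prop :=
  ∀ i, D.cns i ∈ S ∧ (D.cns i).chaseStep (D.asg i) (D.inst i) (D.inst (i+1))

/-- The nulls freshly introduced in the first `r` steps are globally fresh,
i.e. do not occur in any earlier instance of the sequence. -/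
def ChaseData.fresh (D : ChaseData) (r : ℕ) : Prop :=
  ∀ i < r, ∀ v, v.isNull → v ∈ adom (D.inst (i+1)) → v ∉ adom (D.inst i) →
    ∀ j ≤ i, v ∉ adom (D.inst j)

/-- Global freshness for an infinite sequence. -/
def ChaseData.freshAll (D : ChaseData) : Prop := ∀ r, D.fresh r

/-- The chase with `S` terminates on the instance `I`: there is no infinite
chase sequence starting from `I`. -/
def chaseTerminates (S : Set Constraint) (I : Set Fact) : Prop :=
  ¬ ∃ D : ChaseData, D.inst 0 = I ∧ D.okAll S

/-- `J` is a result of the chase of `I` with `S`: it is the final instance of a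
finite chase sequence starting from `I` and satisfies all constraints of `S`. -/
def ChaseResult (S : Set Constraint) (I J : Set Fact) : Prop :=
  ∃ (D : ChaseData) (r : ℕ), D.inst 0 = I ∧ D.okUpTo S r ∧ D.inst r = J ∧
    ∀ α ∈ S, α.holds J

/-- `α` is `(I,S)`-irrelevant: no chase sequence starting from `I` with `S`
contains a chase step applying `α`. -/
def Irrelevant (I : Set Fact) (S : Set Constraint) (α : Constraint) : Prop :=
  ¬ ∃ (D : ChaseData) (r : ℕ), D.inst 0 = I ∧ D.okUpTo S r ∧ ∃ i < r, D.cns i = α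

/-! ## Affected positions, propagation graph and safety -/

/-- The affected positions `aff(S)` of (the TGDs of) a constraint set `S`. -/
inductive Affected (S : Set Constraint) : Pos → Prop
  | ex (t : TGD) (y : ℕ) (π : Pos) :
      Constraint.tgd t ∈ S → y ∈ t.exVars → occursAt t.head y π → Affected S π
  | uni (t : TGD) (x : ℕ) (π : Pos) :
      Constraint.tgd t ∈ S → x ∈ t.uniVars → occursAt t.head x π →
      (∃ π', occursAt t.body x π') →
      (∀ π', occursAt t.body x π' → Affected S π') → Affected S π

/-- A (non-special) edge `π1 → π2` of the propagation graph `prop(S)`. -/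
def propEdge (S : Set Constraint) (π1 π2 : Pos) : Prop :=
  ∃ t, Constraint.tgd t ∈ S ∧ ∃ x ∈ t.uniVars, x ∈ varsOf t.head ∧
    occursAt t.body x π1 ∧ (∀ π, occursAt t.body x π → Affected S π) ∧
    occursAt t.head x π2

/-- A special edge `π1 →* π2` of the propagation graph `prop(S)`. -/
def propSpecialEdge (S : Set Constraint) (π1 π2 : Pos) : Prop :=
  ∃ t, Constraint.tgd t ∈ S ∧ ∃ x ∈ t.uniVars, x ∈ varsOf t.head ∧
    occursAt t.body x π1 ∧ (∀ π, occursAt t.body x π → Affected S π) ∧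
    ∃ y ∈ t.exVars, occursAt t.head y π2

/-- Any edge of the propagation graph. -/
def propAnyEdge (S : Set Constraint) (π1 π2 : Pos) : Prop :=
  propEdge S π1 π2 ∨ propSpecialEdge S π1 π2

/-- `S` is safe: the propagation graph `prop(S)` has no cycle going through a
special edge. -/
def IsSafe (S : Set Constraint) : Prop :=
  ¬ ∃ π1 π2, propSpecialEdge S π1 π2 ∧ Relation.ReflTransGen (propAnyEdge S) π2 π1

/-! ## Restriction systems -/

/-- The fact `F` has a labeled null at position `π`. -/
def Fact.nullAt (F : Fact) (π : Pos) : Prop :=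
  F.rel = π.1 ∧ ∃ v, F.args[π.2]? = some v ∧ v.isNull

/-- The instance `I` contains labeled nulls only in positions from `P`. -/
def nullsOnlyIn (I : Set Fact) (P : Set Pos) : Prop :=
  ∀ F ∈ I, ∀ π : Pos, F.nullAt π → π ∈ P

/-- `α ≺_P β`. -/
def prec (P : Set Pos) (α β : Constraint) : Prop :=
  ∃ (I J : Set Fact) (a b : ℕ → Val),
    I.Finite ∧ nullsOnlyIn I P ∧
    ¬ α.satAt I a ∧ β.satAt I b ∧
    α.chaseStep a I J ∧ ¬ β.satAt J b ∧
    ∃ v ∈ β.headUniVars, (b v).isNull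

/-- `aff-cl(t,P)` for a TGD `t` and a set of positions `P`. -/
def affCl (t : TGD) (P : Set Pos) : Set Pos :=
  {π | π ∈ posOfAtoms t.head ∧
    ((∀ x ∈ t.uniVars, occursAt t.head x π → ∀ π', occursAt t.body x π' → π' ∈ P) ∨
     (∃ y ∈ t.exVars, occursAt t.head y π))}

/-- A restriction system: a directed graph on constraints together with a
position-set labelling. -/
structure RestrSys : Type where
  E : Constraint → Constraint → Prop
  f : Constraint → Set Pos

/-- The defining closure conditions of a restriction system for `S`. -/
def RestrSys.valid (S : Set Constraint) (R : RestrSys) : Prop :=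
  (∀ t : TGD, ∀ β, Constraint.tgd t ∈ S → β ∈ S → R.E (.tgd t) β →
      affCl t (R.f (.tgd t)) ∩ β.pos ⊆ R.f β) ∧
  (∀ e : EGD, ∀ β, Constraint.egd e ∈ S → β ∈ S → R.E (.egd e) β →
      R.f (.egd e) ∩ β.pos ⊆ R.f β) ∧
  (∀ α β, α ∈ S → β ∈ S → prec (R.f α) α β → R.E α β)

/-- Pointwise inclusion of restriction systems. -/
def RestrSys.le (R1 R2 : RestrSys) : Prop :=
  (∀ a b, R1.E a b → R2.E a b) ∧ (∀ a, R1.f a ⊆ R2.f a)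

/-- The minimal restriction system of `S` (obtained from the empty system by
repeatedly enforcing the closure conditions, extending only as required). -/
def IsMinimalRS (S : Set Constraint) (R : RestrSys) : Prop :=
  R.valid S ∧ ∀ R', R'.valid S → R.le R'

/-- The edge relation of a restriction system, restricted to `S`. -/
def edgeOn (S : Set Constraint) (E : Constraint → Constraint → Prop)
    (a b : Constraint) : Prop :=
  a ∈ S ∧ b ∈ S ∧ E a b

/-- The strongly connected component of `α`. -/
def sccOf (S : Set Constraint) (E : Constraint → Constraint → Prop)
    (α : Constraint) : Set Constraint :=
  {β | β ∈ S ∧ Relation.ReflTransGen (edgeOn S E) α β ∧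
    Relation.ReflTransGen (edgeOn S E) β α}

/-- The (nontrivial) strongly connected components of the graph `(S,E)`,
i.e. those containing a cycle. -/
def SCCs (S : Set Constraint) (E : Constraint → Constraint → Prop) :
    Set (Set Constraint) :=
  {C | ∃ α ∈ S, Relation.TransGen (edgeOn S E) α α ∧ C = sccOf S E α}

/-- `PartMem S S'` holds iff `S' ∈ part(S)`, where `part` is the recursive
algorithm computing strongly connected components of minimal restriction
systems. -/
inductive PartMem : Set Constraint → Set Constraint → Prop
  | base (S : Set Constraint) (R : RestrSys) :
      IsMinimalRS S R → SCCs S R.E = {S} → PartMem S S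
  | step (S : Set Constraint) (R : RestrSys) (C S' : Set Constraint) :
      IsMinimalRS S R → SCCs S R.E ≠ {S} → C ∈ SCCs S R.E →
      PartMem C S' → PartMem S S'

/-- `S` is inductively restricted: every `S' ∈ part(S)` is safe. -/
def InductivelyRestricted (S : Set Constraint) : Prop :=
  ∀ S', PartMem S S' → IsSafe S'

/-- `S` is safely restricted: every strongly connected component of its
minimal restriction system is safe. -/
def SafelyRestricted (S : Set Constraint) : Prop :=
  ∀ R, IsMinimalRS S R → ∀ C ∈ SCCs S R.E, IsSafe C

/-! ## Monitor graphs -/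

/-- A node of a monitor graph: a value together with a set of positions. -/
abbrev MNode : Type := Val × Set Pos

/-- A labeled edge of a monitor graph. -/
structure MEdge : Type where
  src : MNode
  cns : Constraint
  lbl : Set Pos
  tgt : MNode

/-- The labeled nulls newly introduced by a chase step from `I` to `J`. -/
def newNulls (I J : Set Fact) : Set Val := {v | v.isNull ∧ v ∈ adom J ∧ v ∉ adom I}

/-- The set of positions at which the value `v` occurs in the instance `I`. -/
def posOfVal (I : Set Fact) (v : Val) : Set Pos :=
  {π | ∃ F ∈ I, F.rel = π.1 ∧ F.args[π.2]? = some v}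

/-- The set of positions of the instantiated body `body(α(ā))` in which the
value `v` occurs. -/
def instBodyPos (α : Constraint) (ν : ℕ → Val) (v : Val) : Set Pos :=
  {π | ∃ A ∈ α.bodyAtoms, A.rel = π.1 ∧ (A.args.map (Term.eval ν))[π.2]? = some v}

/-- The monitor-graph nodes created by the `i`-th chase step. -/
def ChaseData.mgNew (D : ChaseData) (i : ℕ) : Set MNode :=
  {p | ∃ n ∈ newNulls (D.inst i) (D.inst (i+1)), p = (n, posOfVal (D.inst (i+1)) n)}

/-- The nodes of the monitor graph of the length-`i` prefix of `D`. -/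
def ChaseData.mgV (D : ChaseData) : ℕ → Set MNode
  | 0 => ∅
  | i+1 => D.mgV i ∪ D.mgNew i

/-- The edges of the monitor graph of the length-`i` prefix of `D`. -/
def ChaseData.mgE (D : ChaseData) : ℕ → Set MEdge
  | 0 => ∅
  | i+1 => D.mgE i ∪
      {e | e.src ∈ D.mgV i ∧ e.tgt ∈ D.mgNew i ∧ e.cns = D.cns i ∧
           e.lbl = instBodyPos (D.cns i) (D.asg i) e.src.1}

/-- A path in a monitor graph: a list of edges of the graph in which consecutive
edges are chained (`p_{5,6}(e_i) = p_{1,2}(e_{i+1})`). -/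
def IsPath (E : Set MEdge) (l : List MEdge) : Prop :=
  (∀ e ∈ l, e ∈ E) ∧ l.Chain' (fun a b => a.tgt = b.src)

/-- The projection `p_{2,3,4,6}` of an edge. -/
def MEdge.sig (e : MEdge) : Set Pos × Constraint × Set Pos × Set Pos :=
  (e.src.2, e.cns, e.lbl, e.tgt.2)

/-- A monitor graph with edge set `E` is `k`-cyclic: some path contains `k`
pairwise distinct edges, in order, that agree on the projection `p_{2,3,4,6}`. -/
def kCyclic (E : Set MEdge) (k : ℕ) : Prop :=
  ∃ l es : List MEdge, IsPath E l ∧ es.Sublist l ∧ es.length = k ∧ es.Nodup ∧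
    es.Chain' (fun a b => a.sig = b.sig)

/-- `DepthLe E v d`: the depth of the node `v` in the monitor graph with edge
set `E` is at most `d` (depth `0` for nodes without predecessors, and `1` plus
the maximal depth of the predecessors otherwise). -/
inductive DepthLe (E : Set MEdge) : MNode → ℕ → Prop
  | intro (v : MNode) (d : ℕ) (f : MEdge → ℕ) :
      (∀ e ∈ E, e.tgt = v → f e < d) →
      (∀ e, e ∈ E → e.tgt = v → DepthLe E e.src (f e)) → DepthLe E v d

/-- The node `v` has depth exactly `d`. -/
def HasDepth (E : Set MEdge) (v : MNode) (d : ℕ) : Prop :=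
  DepthLe E v d ∧ ∀ d' < d, ¬ DepthLe E v d'


lemma affected_mono {S T : Set Constraint} (h : S ⊆ T) {π : Pos}
    (ha : Affected S π) : Affected T π := by
  induction ha with
  | ex t y π ht hy ho => exact Affected.ex t y π (h ht) hy ho
  | uni t x π ht hx ho hex _ ih => exact Affected.uni t x π (h ht) hx ho hex ih

lemma propEdge_mono {S T : Set Constraint} (h : S ⊆ T) {π1 π2 : Pos}
    (he : propEdge S π1 π2) : propEdge T π1 π2 := by
  obtain ⟨t, ht, x, hx, hxh, hocc, haff, hocc2⟩ := he
  exact ⟨t, h ht, x, hx, hxh, hocc, fun π hπ => affected_mono h (haff π hπ), hocc2⟩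

lemma propSpecialEdge_mono {S T : Set Constraint} (h : S ⊆ T) {π1 π2 : Pos}
    (he : propSpecialEdge S π1 π2) : propSpecialEdge T π1 π2 := by
  obtain ⟨t, ht, x, hx, hxh, hocc, haff, y, hy, hyo⟩ := he
  exact ⟨t, h ht, x, hx, hxh, hocc, fun π hπ => affected_mono h (haff π hπ), y, hy, hyo⟩

lemma propAnyEdge_mono {S T : Set Constraint} (h : S ⊆ T) {π1 π2 : Pos}
    (he : propAnyEdge S π1 π2) : propAnyEdge T π1 π2 := by
  cases he with
  | inl he => exact Or.inl (propEdge_mono h he)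
  | inr he => exact Or.inr (propSpecialEdge_mono h he)

lemma isSafe_anti {S T : Set Constraint} (h : S ⊆ T) (hs : IsSafe T) : IsSafe S := by
  rintro ⟨π1, π2, hse, hrt⟩
  exact hs ⟨π1, π2, propSpecialEdge_mono h hse,
    Relation.ReflTransGen.mono (r := propAnyEdge S) (p := propAnyEdge T)
      (fun a b hab => propAnyEdge_mono h hab) _ _ hrt⟩

lemma sccs_subset {S : Set Constraint} {E : Constraint → Constraint → Prop}
    {C : Set Constraint} (h : C ∈ SCCs S E) : C ⊆ S := by
  obtain ⟨α, hα, _, rfl⟩ := h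
  exact fun β hβ => hβ.1

lemma partMem_subset {S S' : Set Constraint} (h : PartMem S S') : S' ⊆ S := by
  induction h with
  | base => exact subset_rfl
  | step S R C S' hmin hne hC hpm ih => exact ih.trans (sccs_subset hC)

/-- Lemma, first bullet. If a set `Σ` of TGDs and EGDs is safely
restricted, then `Σ` is inductively restricted. -/
theorem safelyRestricted_implies_inductivelyRestricted
    (S : Set Constraint) (hfin : S.Finite) (hwf : ∀ α ∈ S, α.wf)
    (hsr : SafelyRestricted S) : InductivelyRestricted S := by
  intro S' h
  cases h with
  | base S R hmin hscc =>
      exact hsr R hmin S (by rw [hscc]; exact rfl)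
  | step S R C S' hmin hne hC hpm =>
      exact isSafe_anti (partMem_subset hpm) (hsr R hmin C hC)

end StopChase
end

section
/- There exists a set Σ of TGDs that is inductively restricted but not safely restricted. Concretely, over unary S and binary E, the set Σ' = {α1, α2, α3} with α1 := S(x), E(x,y) → E(y,x), α2 := S(x), E(x,y) → ∃z E(y,z), E(z,x), and α3 := ∃x,y S(x), E(x,y) satisfies part(Σ') = ∅ (hence Σ' is inductively restricted), while the minimal restriction system of Σ' contains the strongly connected component {α1, α2}, which is not safe (hence Σ' is not safely restricted). -/
set_option maxHeartbeats 1000000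

namespace StopChase

/-- The unary relation symbol `S`. -/
def Srel : RelSym := (0, 1)
/-- The binary relation symbol `E`. -/
def Erel : RelSym := (1, 2)

/-- `α1 := S(x), E(x,y) → E(y,x)`. -/
def alpha1 : Constraint :=
  .tgd ⟨[⟨Srel, [Term.var 0]⟩, ⟨Erel, [Term.var 0, Term.var 1]⟩],
        [⟨Erel, [Term.var 1, Term.var 0]⟩]⟩

/-- `α2 := S(x), E(x,y) → ∃z E(y,z), E(z,x)`. -/
def alpha2 : Constraint :=
  .tgd ⟨[⟨Srel, [Term.var 0]⟩, ⟨Erel, [Term.var 0, Term.var 1]⟩],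
        [⟨Erel, [Term.var 1, Term.var 2]⟩, ⟨Erel, [Term.var 2, Term.var 0]⟩]⟩

/-- `α3 := ∃x,y S(x), E(x,y)`. -/
def alpha3 : Constraint :=
  .tgd ⟨[], [⟨Srel, [Term.var 0]⟩, ⟨Erel, [Term.var 0, Term.var 1]⟩]⟩

/-- `Σ' := {α1, α2, α3}`. -/
def SigmaPrime : Set Constraint := {alpha1, alpha2, alpha3}


lemma varsBody_iff (v : ℕ) :
    v ∈ varsOf [(⟨Srel, [Term.var 0]⟩ : Atom), ⟨Erel, [Term.var 0, Term.var 1]⟩] ↔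
      v = 0 ∨ v = 1 := by
  simp [varsOf, Atom.vars]

lemma sat1_iff (I : Set Fact) (ν : ℕ → Val) :
    alpha1.satAt I ν ↔
      ((⟨Srel, [ν 0]⟩ : Fact) ∈ I ∧ (⟨Erel, [ν 0, ν 1]⟩ : Fact) ∈ I →
        (⟨Erel, [ν 1, ν 0]⟩ : Fact) ∈ I) := by
  simp only [alpha1, Constraint.satAt, bodyHolds, List.forall_mem_cons,
    List.forall_mem_nil, and_true, Atom.inst, Term.eval, List.map, varsBody_iff]
  constructor
  · rintro h ⟨h1, h2⟩
    obtain ⟨ν', hag, hh, -⟩ := h ⟨h1, h2, by simp⟩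
    rwa [hag 1 (Or.inr rfl), hag 0 (Or.inl rfl)] at hh
  · rintro h ⟨h1, h2, -⟩
    exact ⟨ν, fun v _ => rfl, h ⟨h1, h2⟩, by simp⟩

lemma sat2_iff (I : Set Fact) (ν : ℕ → Val) :
    alpha2.satAt I ν ↔
      ((⟨Srel, [ν 0]⟩ : Fact) ∈ I ∧ (⟨Erel, [ν 0, ν 1]⟩ : Fact) ∈ I →
        ∃ c, (⟨Erel, [ν 1, c]⟩ : Fact) ∈ I ∧ (⟨Erel, [c, ν 0]⟩ : Fact) ∈ I) := by
  simp only [alpha2, Constraint.satAt, bodyHolds, List.forall_mem_cons,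
    List.forall_mem_nil, and_true, Atom.inst, Term.eval, List.map, varsBody_iff]
  constructor
  · rintro h ⟨h1, h2⟩
    obtain ⟨ν', hag, hh1, hh2, -⟩ := h ⟨h1, h2, by simp⟩
    rw [hag 1 (Or.inr rfl)] at hh1
    rw [hag 0 (Or.inl rfl)] at hh2
    exact ⟨ν' 2, hh1, hh2⟩
  · rintro h ⟨h1, h2, -⟩
    obtain ⟨c, hc1, hc2⟩ := h ⟨h1, h2⟩
    refine ⟨fun v => if v = 2 then c else ν v, ?_, by simpa, by simpa, by simp⟩
    rintro v (rfl | rfl) <;> simp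

lemma sat3_iff (I : Set Fact) (ν : ℕ → Val) :
    alpha3.satAt I ν ↔
      ∃ x y : Val, (⟨Srel, [x]⟩ : Fact) ∈ I ∧ (⟨Erel, [x, y]⟩ : Fact) ∈ I := by
  simp only [alpha3, Constraint.satAt, bodyHolds, List.forall_mem_cons,
    List.forall_mem_nil, and_true, Atom.inst, Term.eval, List.map]
  constructor
  · intro h
    obtain ⟨ν', -, hh1, hh2, -⟩ := h (by simp)
    exact ⟨ν' 0, ν' 1, hh1, hh2⟩
  · rintro ⟨x, y, h1, h2⟩ -
    refine ⟨fun v => if v = 0 then x else y, ?_, by simpa, by simpa, by simp⟩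
    intro v hv
    simp [varsOf] at hv



lemma exVars2_iff (v : ℕ) :
    v ∈ TGD.exVars ⟨[⟨Srel, [Term.var 0]⟩, ⟨Erel, [Term.var 0, Term.var 1]⟩],
        [⟨Erel, [Term.var 1, Term.var 2]⟩, ⟨Erel, [Term.var 2, Term.var 0]⟩]⟩ ↔ v = 2 := by
  simp [TGD.exVars, varsOf, Atom.vars]
  constructor
  · rintro ⟨(rfl|rfl)|(rfl|rfl), h⟩ <;> tauto
  · rintro rfl
    exact ⟨by tauto, by omega, by omega⟩

lemma chase1_elim {a : ℕ → Val} {I J : Set Fact} (h : alpha1.chaseStep a I J) :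
    ¬ alpha1.satAt I a ∧ J = I ∪ {(⟨Erel, [a 1, a 0]⟩ : Fact)} := by
  obtain ⟨hns, ν', hag, -, -, hJ⟩ := h
  have h0 := hag 0 (by rw [show varsOf _ = varsOf _ from rfl, varsBody_iff]; tauto)
  have h1 := hag 1 (by rw [show varsOf _ = varsOf _ from rfl, varsBody_iff]; tauto)
  refine ⟨hns, ?_⟩
  rw [hJ]
  congr 1
  ext F
  constructor
  · rintro ⟨A, hA, rfl⟩
    simp only [List.mem_cons, List.not_mem_nil, or_false] at hA
    subst hA
    simp [Atom.inst, Term.eval, h0, h1]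
  · rintro rfl
    exact ⟨⟨Erel, [Term.var 1, Term.var 0]⟩, by simp, by simp [Atom.inst, Term.eval, h0, h1]⟩

lemma chase2_elim {a : ℕ → Val} {I J : Set Fact} (h : alpha2.chaseStep a I J) :
    ¬ alpha2.satAt I a ∧ ∃ n : Val, n.isNull ∧ n ∉ adom I ∧
      J = I ∪ {(⟨Erel, [a 1, n]⟩ : Fact), ⟨Erel, [n, a 0]⟩} := by
  obtain ⟨hns, ν', hag, hex, -, hJ⟩ := h
  have h0 := hag 0 (by rw [show varsOf _ = varsOf _ from rfl, varsBody_iff]; tauto)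
  have h1 := hag 1 (by rw [show varsOf _ = varsOf _ from rfl, varsBody_iff]; tauto)
  have h2 := hex 2 (by rw [show TGD.exVars _ = TGD.exVars _ from rfl, exVars2_iff])
  refine ⟨hns, ν' 2, h2.1, h2.2, ?_⟩
  rw [hJ]
  congr 1
  ext F
  constructor
  · rintro ⟨A, hA, rfl⟩
    simp only [List.mem_cons, List.not_mem_nil, or_false] at hA
    rcases hA with rfl | rfl
    · exact Or.inl (by simp [Atom.inst, Term.eval, h1])
    · exact Or.inr (by simp [Atom.inst, Term.eval, h0])
  · rintro (rfl | rfl)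
    · exact ⟨⟨Erel, [Term.var 1, Term.var 2]⟩, by simp, by simp [Atom.inst, Term.eval, h1]⟩
    · exact ⟨⟨Erel, [Term.var 2, Term.var 0]⟩, by simp, by simp [Atom.inst, Term.eval, h0]⟩



lemma getElem?_single {α : Type} (x v : α) (i : ℕ) :
    [x][i]? = some v ↔ i = 0 ∧ v = x := by
  match i with
  | 0 => simp [eq_comm]
  | (n+1) => simp

lemma getElem?_pair {α : Type} (x y v : α) (i : ℕ) :
    [x, y][i]? = some v ↔ (i = 0 ∧ v = x) ∨ (i = 1 ∧ v = y) := by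
  match i with
  | 0 => simp [eq_comm]
  | 1 => simp [eq_comm]
  | (n+2) => simp

lemma exVars3_iff (v : ℕ) :
    v ∈ TGD.exVars ⟨[], [⟨Srel, [Term.var 0]⟩, ⟨Erel, [Term.var 0, Term.var 1]⟩]⟩ ↔
      v = 0 ∨ v = 1 := by
  simp [TGD.exVars, varsOf, Atom.vars]

lemma exVars1_iff (v : ℕ) :
    v ∈ TGD.exVars ⟨[⟨Srel, [Term.var 0]⟩, ⟨Erel, [Term.var 0, Term.var 1]⟩],
      [⟨Erel, [Term.var 1, Term.var 0]⟩]⟩ ↔ False := by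
  simp [TGD.exVars, varsOf, Atom.vars]
  tauto

lemma hu1_iff (v : ℕ) : v ∈ alpha1.headUniVars ↔ v = 0 ∨ v = 1 := by
  simp [alpha1, Constraint.headUniVars, varsOf, Atom.vars]
  tauto

lemma hu2_iff (v : ℕ) : v ∈ alpha2.headUniVars ↔ v = 0 ∨ v = 1 := by
  simp [alpha2, Constraint.headUniVars, varsOf, Atom.vars]
  tauto

lemma hu3_iff (v : ℕ) : v ∈ alpha3.headUniVars ↔ False := by
  simp [alpha3, Constraint.headUniVars, varsOf, Atom.vars]

lemma constOnly_nullsOnlyIn {I : Set Fact} (P : Set Pos)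
    (h : ∀ F ∈ I, ∀ v ∈ F.args, ¬ v.isNull) : nullsOnlyIn I P := by
  rintro F hF π ⟨-, v, hv, hnull⟩
  exact absurd hnull (h F hF v (List.mem_of_getElem? hv))



private def n0 : Val := .null 0
private def n1 : Val := .null 1
private def c0 : Val := .const 0
private def c1 : Val := .const 1

/-- `α3 ≺_P α1` and `α3 ≺_P α2` for every `P`. -/
lemma prec_3 (P : Set Pos) : prec P alpha3 alpha1 ∧ prec P alpha3 alpha2 := by
  set J : Set Fact := {⟨Srel, [n0]⟩, ⟨Erel, [n0, n1]⟩} with hJdef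
  have hSJ : (⟨Srel, [n0]⟩ : Fact) ∈ J := Or.inl rfl
  have hEJ : (⟨Erel, [n0, n1]⟩ : Fact) ∈ J := Or.inr rfl
  set a : ℕ → Val := fun _ => c0 with ha
  set b : ℕ → Val := fun v => if v = 0 then n0 else n1 with hb
  have hns3 : ¬ alpha3.satAt ∅ a := by
    rw [sat3_iff]; simp
  have hstep : alpha3.chaseStep a ∅ J := by
    refine ⟨hns3, b, ?_, ?_, ?_, ?_⟩
    · intro v hv
      simp [alpha3, varsOf] at hv
    · intro v hv
      rw [show TGD.exVars _ = TGD.exVars _ from rfl, exVars3_iff] at hv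
      rcases hv with rfl | rfl <;> simp [hb, adom, n0, n1, Val.isNull]
    · intro v hv w hw
      rw [show TGD.exVars _ = TGD.exVars _ from rfl, exVars3_iff] at hv hw
      rcases hv with rfl | rfl <;> rcases hw with rfl | rfl <;> simp [hb, n0, n1]
    · ext F
      simp only [Set.mem_union, Set.mem_empty_iff_false, false_or, Set.mem_setOf_eq]
      constructor
      · rintro (rfl | rfl)
        · exact ⟨⟨Srel, [Term.var 0]⟩, by simp, by simp [Atom.inst, Term.eval, hb]⟩
        · exact ⟨⟨Erel, [Term.var 0, Term.var 1]⟩, by simp, by simp [Atom.inst, Term.eval, hb]⟩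
      · rintro ⟨A, hA, rfl⟩
        simp only [List.mem_cons, List.not_mem_nil, or_false] at hA
        rcases hA with rfl | rfl
        · exact Or.inl (by simp [Atom.inst, Term.eval, hb])
        · exact Or.inr (by simp [Atom.inst, Term.eval, hb])
  have hfin : (∅ : Set Fact).Finite := Set.finite_empty
  have hnulls : nullsOnlyIn ∅ P := by rintro F hF; exact absurd hF (Set.notMem_empty F)
  constructor
  · refine ⟨∅, J, a, b, hfin, hnulls, hns3, ?_, hstep, ?_, 0, (hu1_iff 0).mpr (Or.inl rfl), ?_⟩
    · rw [sat1_iff]; simp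
    · rw [sat1_iff]
      intro h
      have := h ⟨by simpa [hb] using hSJ, by simpa [hb] using hEJ⟩
      simp [hb, hJdef, n0, n1] at this
    · simp [hb, n0, Val.isNull]
  · refine ⟨∅, J, a, b, hfin, hnulls, hns3, ?_, hstep, ?_, 0, (hu2_iff 0).mpr (Or.inl rfl), ?_⟩
    · rw [sat2_iff]; simp
    · rw [sat2_iff]
      intro h
      obtain ⟨c, hc1, hc2⟩ := h ⟨by simpa [hb] using hSJ, by simpa [hb] using hEJ⟩
      simp [hb, hJdef, n0, n1] at hc1
    · simp [hb, n0, Val.isNull]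

/-- `α2 ≺_P α1` for every `P`. -/
lemma prec_21 (P : Set Pos) : prec P alpha2 alpha1 := by
  set I : Set Fact := {⟨Srel, [c0]⟩, ⟨Srel, [c1]⟩, ⟨Erel, [c0, c1]⟩} with hIdef
  set J : Set Fact := I ∪ {⟨Erel, [c1, n0]⟩, ⟨Erel, [n0, c0]⟩} with hJdef
  set a : ℕ → Val := fun v => if v = 0 then c0 else c1 with ha
  set ν' : ℕ → Val := fun v => if v = 0 then c0 else if v = 1 then c1 else n0 with hν
  set b : ℕ → Val := fun v => if v = 0 then c1 else n0 with hb
  have hns2 : ¬ alpha2.satAt I a := by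
    rw [sat2_iff]
    intro h
    obtain ⟨c, hc1, hc2⟩ := h ⟨by simp [ha, hIdef], by simp [ha, hIdef]⟩
    simp [ha, hIdef, c0, c1] at hc1
  have hstep : alpha2.chaseStep a I J := by
    refine ⟨hns2, ν', ?_, ?_, ?_, ?_⟩
    · intro v hv
      rw [show varsOf _ = varsOf _ from rfl, varsBody_iff] at hv
      rcases hv with rfl | rfl <;> simp [hν, ha]
    · intro v hv
      rw [show TGD.exVars _ = TGD.exVars _ from rfl, exVars2_iff] at hv
      subst hv
      refine ⟨by simp [hν, n0, Val.isNull], ?_⟩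
      intro hmem
      obtain ⟨F, hF, hvF⟩ := hmem
      rcases hF with rfl | rfl | rfl <;> simp [hν, n0, c0, c1] at hvF
    · intro v hv w hw _
      rw [show TGD.exVars _ = TGD.exVars _ from rfl, exVars2_iff] at hv hw
      omega
    · rw [hJdef]
      congr 1
      ext F
      constructor
      · rintro (rfl | rfl)
        · exact ⟨⟨Erel, [Term.var 1, Term.var 2]⟩, by simp, by simp [Atom.inst, Term.eval, hν, ha]⟩
        · exact ⟨⟨Erel, [Term.var 2, Term.var 0]⟩, by simp, by simp [Atom.inst, Term.eval, hν, ha]⟩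
      · rintro ⟨A, hA, rfl⟩
        simp only [List.mem_cons, List.not_mem_nil, or_false] at hA
        rcases hA with rfl | rfl
        · exact Or.inl (by simp [Atom.inst, Term.eval, hν, ha])
        · exact Or.inr (by simp [Atom.inst, Term.eval, hν, ha])
  refine ⟨I, J, a, b, ?_, ?_, hns2, ?_, hstep, ?_, 1, (hu1_iff 1).mpr (Or.inr rfl), ?_⟩
  · exact (Set.finite_singleton _).insert _ |>.insert _
  · refine constOnly_nullsOnlyIn P ?_
    rintro F (rfl | rfl | rfl) v hv <;> simp at hv <;> rcases hv with rfl | rfl <;>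
      simp [c0, c1, Val.isNull]
  · rw [sat1_iff]
    rintro ⟨-, hE⟩
    simp [hb, hIdef, c0, c1, n0] at hE
  · rw [sat1_iff]
    intro h
    have := h ⟨by simp [hb, hJdef, hIdef], by simp [hb, hJdef]⟩
    simp [hb, hJdef, hIdef, c0, c1, n0] at this
  · simp [hb, n0, Val.isNull]

/-- `α1 ≺_P α2` whenever `P` contains the three positions. -/
lemma prec_12 (P : Set Pos) (hS : ((Srel, 0) : Pos) ∈ P) (hE0 : ((Erel, 0) : Pos) ∈ P)
    (hE1 : ((Erel, 1) : Pos) ∈ P) : prec P alpha1 alpha2 := by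
  set I : Set Fact := {⟨Srel, [n0]⟩, ⟨Srel, [n1]⟩, ⟨Erel, [n0, n1]⟩} with hIdef
  set J : Set Fact := I ∪ {⟨Erel, [n1, n0]⟩} with hJdef
  set a : ℕ → Val := fun v => if v = 0 then n0 else n1 with ha
  set b : ℕ → Val := fun v => if v = 0 then n1 else n0 with hb
  have hns1 : ¬ alpha1.satAt I a := by
    rw [sat1_iff]
    intro h
    have := h ⟨by simp [ha, hIdef], by simp [ha, hIdef]⟩
    simp [ha, hIdef, n0, n1] at this
  have hstep : alpha1.chaseStep a I J := by
    refine ⟨hns1, a, fun v _ => rfl, ?_, ?_, ?_⟩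
    · intro v hv
      rw [show TGD.exVars _ = TGD.exVars _ from rfl, exVars1_iff] at hv
      exact hv.elim
    · intro v hv
      rw [show TGD.exVars _ = TGD.exVars _ from rfl, exVars1_iff] at hv
      exact hv.elim
    · rw [hJdef]
      congr 1
      ext F
      constructor
      · rintro rfl
        exact ⟨⟨Erel, [Term.var 1, Term.var 0]⟩, by simp, by simp [Atom.inst, Term.eval, ha]⟩
      · rintro ⟨A, hA, rfl⟩
        simp only [List.mem_cons, List.not_mem_nil, or_false] at hA
        subst hA
        simp [Atom.inst, Term.eval, ha]
  refine ⟨I, J, a, b, ?_, ?_, hns1, ?_, hstep, ?_, 1, (hu2_iff 1).mpr (Or.inr rfl), ?_⟩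
  · exact (Set.finite_singleton _).insert _ |>.insert _
  · rintro F (rfl | rfl | rfl) π ⟨hrel, v, hv, -⟩
    · rw [getElem?_single] at hv
      have : π = ((Srel, 0) : Pos) := Prod.ext hrel.symm hv.1
      rw [this]; exact hS
    · rw [getElem?_single] at hv
      have : π = ((Srel, 0) : Pos) := Prod.ext hrel.symm hv.1
      rw [this]; exact hS
    · rw [getElem?_pair] at hv
      rcases hv with ⟨h2, -⟩ | ⟨h2, -⟩
      · have : π = ((Erel, 0) : Pos) := Prod.ext hrel.symm h2
        rw [this]; exact hE0
      · have : π = ((Erel, 1) : Pos) := Prod.ext hrel.symm h2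
        rw [this]; exact hE1
  · rw [sat2_iff]
    rintro ⟨-, hE⟩
    simp [hb, hIdef, n0, n1] at hE
  · rw [sat2_iff]
    intro h
    obtain ⟨c, hc1, hc2⟩ := h ⟨by simp [hb, hJdef, hIdef], by simp [hb, hJdef]⟩
    simp only [hb, if_pos rfl, if_neg (by omega : ¬(1 = 0))] at hc1 hc2
    rcases (by simpa [hJdef, hIdef, n0, n1] using hc1 : c = n1) with rfl
    simp [hJdef, hIdef, n0, n1] at hc2
  · simp [hb, n0, Val.isNull]



lemma Srel_ne_Erel : Srel ≠ Erel := by simp [Srel, Erel]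

/-- No constraint ever precedes `α3`. -/
lemma not_prec_3 (P : Set Pos) (α : Constraint) : ¬ prec P α alpha3 := by
  rintro ⟨I, J, a, b, -, -, -, -, -, -, v, hv, -⟩
  exact (hu3_iff v).mp hv

/-- `α1 ≺_P α1` never holds. -/
lemma not_prec_11 (P : Set Pos) : ¬ prec P alpha1 alpha1 := by
  rintro ⟨I, J, a, b, -, -, hnsA, hsB, hstep, hnsB, -, -, -⟩
  obtain ⟨-, hJ⟩ := chase1_elim hstep
  subst hJ
  rw [sat1_iff] at hnsA hsB hnsB
  push_neg at hnsA hnsB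
  obtain ⟨⟨hSa, hEa⟩, -⟩ := hnsA
  obtain ⟨⟨hSb, hEb⟩, hhb⟩ := hnsB
  have hSbI : (⟨Srel, [b 0]⟩ : Fact) ∈ I := by
    rcases hSb with h | h
    · exact h
    · exact absurd (congrArg Fact.rel h) Srel_ne_Erel
  rcases hEb with hEbI | hEbeq
  · exact hhb (Or.inl (hsB ⟨hSbI, hEbI⟩))
  · simp only [Set.mem_singleton_iff, Fact.mk.injEq, List.cons.injEq, and_true,
      true_and] at hEbeq
    obtain ⟨h0, h1⟩ := hEbeq
    rw [h0, h1] at hhb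
    exact hhb (Or.inl hEa)

/-- `α2 ≺_P α2` never holds. -/
lemma not_prec_22 (P : Set Pos) : ¬ prec P alpha2 alpha2 := by
  rintro ⟨I, J, a, b, -, -, hnsA, hsB, hstep, hnsB, -, -, -⟩
  obtain ⟨-, n, -, hnadom, hJ⟩ := chase2_elim hstep
  subst hJ
  rw [sat2_iff] at hnsA hsB hnsB
  push_neg at hnsA hnsB
  obtain ⟨⟨hSa, hEa⟩, -⟩ := hnsA
  obtain ⟨⟨hSb, hEb⟩, hhb⟩ := hnsB
  have hSbI : (⟨Srel, [b 0]⟩ : Fact) ∈ I := by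
    rcases hSb with h | h | h
    · exact h
    · exact absurd (congrArg Fact.rel h) Srel_ne_Erel
    · exact absurd (congrArg Fact.rel h) Srel_ne_Erel
  rcases hEb with hEbI | hEbeq | hEbeq
  · obtain ⟨c, hc1, hc2⟩ := hsB ⟨hSbI, hEbI⟩
    exact hhb c (Or.inl hc1) (Or.inl hc2)
  · simp only [Fact.mk.injEq, List.cons.injEq, and_true, true_and] at hEbeq
    obtain ⟨h0, h1⟩ := hEbeq
    rw [h0, h1] at hhb
    exact hhb (a 0) (Or.inr (Or.inr rfl)) (Or.inl hEa)
  · simp only [Set.mem_singleton_iff, Fact.mk.injEq, List.cons.injEq, and_true,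
      true_and] at hEbeq
    obtain ⟨h0, -⟩ := hEbeq
    rw [h0] at hSbI
    exact hnadom ⟨_, hSbI, by simp⟩

/-- The set of `E`-positions. -/
def Epos : Set Pos := {π | π.1 = Erel}

/-- `α1 ≺_P α2` fails when nulls are confined to `E`-positions. -/
lemma not_prec_12E : ¬ prec Epos alpha1 alpha2 := by
  rintro ⟨I, J, a, b, -, hnulls, hnsA, hsB, hstep, hnsB, v, hv, hvnull⟩
  obtain ⟨-, hJ⟩ := chase1_elim hstep
  subst hJ
  rw [sat1_iff] at hnsA
  rw [sat2_iff] at hsB hnsB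
  push_neg at hnsA hnsB
  obtain ⟨⟨hSa, hEa⟩, -⟩ := hnsA
  obtain ⟨⟨hSb, hEb⟩, hhb⟩ := hnsB
  have hSbI : (⟨Srel, [b 0]⟩ : Fact) ∈ I := by
    rcases hSb with h | h
    · exact h
    · exact absurd (congrArg Fact.rel h) Srel_ne_Erel
  have hb0 : ¬ (b 0).isNull := by
    intro hn
    have := hnulls _ hSbI ((Srel, 0) : Pos) ⟨rfl, b 0, by simp, hn⟩
    exact Srel_ne_Erel this
  have hb1 : (b 1).isNull := by
    rcases (hu2_iff v).mp hv with rfl | rfl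
    · exact absurd hvnull hb0
    · exact hvnull
  rcases hEb with hEbI | hEbeq
  · obtain ⟨c, hc1, hc2⟩ := hsB ⟨hSbI, hEbI⟩
    exact hhb c (Or.inl hc1) (Or.inl hc2)
  · simp only [Set.mem_singleton_iff, Fact.mk.injEq, List.cons.injEq, and_true,
      true_and] at hEbeq
    obtain ⟨h0, h1⟩ := hEbeq
    rw [h1] at hb1
    have := hnulls _ hSa ((Srel, 0) : Pos) ⟨rfl, a 0, by simp, hb1⟩
    exact Srel_ne_Erel this



def t1 : TGD := ⟨[⟨Srel, [Term.var 0]⟩, ⟨Erel, [Term.var 0, Term.var 1]⟩],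
    [⟨Erel, [Term.var 1, Term.var 0]⟩]⟩
def t2 : TGD := ⟨[⟨Srel, [Term.var 0]⟩, ⟨Erel, [Term.var 0, Term.var 1]⟩],
    [⟨Erel, [Term.var 1, Term.var 2]⟩, ⟨Erel, [Term.var 2, Term.var 0]⟩]⟩
def t3 : TGD := ⟨[], [⟨Srel, [Term.var 0]⟩, ⟨Erel, [Term.var 0, Term.var 1]⟩]⟩

lemma a1_eq : alpha1 = .tgd t1 := rfl
lemma a2_eq : alpha2 = .tgd t2 := rfl
lemma a3_eq : alpha3 = .tgd t3 := rfl

lemma a12 : alpha1 ≠ alpha2 := by decide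
lemma a13 : alpha1 ≠ alpha3 := by decide
lemma a23 : alpha2 ≠ alpha3 := by decide

lemma a1mem : alpha1 ∈ SigmaPrime := Or.inl rfl
lemma a2mem : alpha2 ∈ SigmaPrime := Or.inr (Or.inl rfl)
lemma a3mem : alpha3 ∈ SigmaPrime := Or.inr (Or.inr rfl)

/-- The three body positions. -/
def Pall : Set Pos := {(Srel, 0), (Erel, 0), (Erel, 1)}

lemma pall_subset_affCl3 (P : Set Pos) : Pall ⊆ affCl t3 P := by
  rintro π (rfl | rfl | rfl)
  · exact ⟨⟨⟨Srel, [Term.var 0]⟩, by simp [t3], rfl, by simp⟩,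
      Or.inr ⟨0, (exVars3_iff 0).mpr (Or.inl rfl),
        ⟨Srel, [Term.var 0]⟩, by simp [t3], rfl, by simp⟩⟩
  · exact ⟨⟨⟨Erel, [Term.var 0, Term.var 1]⟩, by simp [t3], rfl, by simp⟩,
      Or.inr ⟨0, (exVars3_iff 0).mpr (Or.inl rfl),
        ⟨Erel, [Term.var 0, Term.var 1]⟩, by simp [t3], rfl, by simp⟩⟩
  · exact ⟨⟨⟨Erel, [Term.var 0, Term.var 1]⟩, by simp [t3], rfl, by simp⟩,
      Or.inr ⟨1, (exVars3_iff 1).mpr (Or.inr rfl),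
        ⟨Erel, [Term.var 0, Term.var 1]⟩, by simp [t3], rfl, by simp⟩⟩

lemma pall_subset_pos1 : Pall ⊆ alpha1.pos := by
  rintro π (rfl | rfl | rfl)
  · exact ⟨⟨Srel, [Term.var 0]⟩, by simp [alpha1, Constraint.bodyAtoms], rfl, by simp⟩
  · exact ⟨⟨Erel, [Term.var 0, Term.var 1]⟩, by simp [alpha1, Constraint.bodyAtoms], rfl, by simp⟩
  · exact ⟨⟨Erel, [Term.var 0, Term.var 1]⟩, by simp [alpha1, Constraint.bodyAtoms], rfl, by simp⟩

lemma pall_subset_pos2 : Pall ⊆ alpha2.pos := by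
  rintro π (rfl | rfl | rfl)
  · exact ⟨⟨Srel, [Term.var 0]⟩, by simp [alpha2, Constraint.bodyAtoms], rfl, by simp⟩
  · exact ⟨⟨Erel, [Term.var 0, Term.var 1]⟩, by simp [alpha2, Constraint.bodyAtoms], rfl, by simp⟩
  · exact ⟨⟨Erel, [Term.var 0, Term.var 1]⟩, by simp [alpha2, Constraint.bodyAtoms], rfl, by simp⟩

lemma posSE_subset_pall {L : List Atom}
    (hL : L = [(⟨Srel, [Term.var 0]⟩ : Atom), ⟨Erel, [Term.var 0, Term.var 1]⟩]) :
    posOfAtoms L ⊆ Pall := by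
  subst hL
  rintro π ⟨A, hA, hrel, hlt⟩
  simp only [List.mem_cons, List.not_mem_nil, or_false] at hA
  have hπ : π = (π.1, π.2) := rfl
  rcases hA with rfl | rfl
  · simp only [List.length_cons, List.length_nil] at hlt
    rw [hπ, ← hrel, (by omega : π.2 = 0)]
    exact Or.inl rfl
  · simp only [List.length_cons, List.length_nil] at hlt
    rcases (by omega : π.2 = 0 ∨ π.2 = 1) with h | h <;> rw [hπ, ← hrel, h]
    · exact Or.inr (Or.inl rfl)
    · exact Or.inr (Or.inr rfl)

lemma pos1_subset_pall : alpha1.pos ⊆ Pall := posSE_subset_pall rfl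
lemma pos2_subset_pall : alpha2.pos ⊆ Pall := posSE_subset_pall rfl

lemma affCl2_subset_Epos (P : Set Pos) : affCl t2 P ⊆ Epos := by
  rintro π ⟨⟨A, hA, hrel, -⟩, -⟩
  simp only [t2, List.mem_cons, List.not_mem_nil, or_false] at hA
  rcases hA with rfl | rfl <;> exact hrel.symm

/-- Forced edges and position sets of any valid restriction system for `Σ'`. -/
lemma forced {R : RestrSys} (h : R.valid SigmaPrime) :
    R.E alpha3 alpha1 ∧ R.E alpha3 alpha2 ∧ R.E alpha2 alpha1 ∧
      Pall ⊆ R.f alpha1 ∧ Pall ⊆ R.f alpha2 ∧ R.E alpha1 alpha2 := by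
  obtain ⟨hv1, -, hv3⟩ := h
  have e31 : R.E alpha3 alpha1 := hv3 _ _ a3mem a1mem (prec_3 _).1
  have e32 : R.E alpha3 alpha2 := hv3 _ _ a3mem a2mem (prec_3 _).2
  have e21 : R.E alpha2 alpha1 := hv3 _ _ a2mem a1mem (prec_21 _)
  have hf1 : Pall ⊆ R.f alpha1 := by
    intro π hπ
    exact hv1 t3 alpha1 a3mem a1mem e31 ⟨pall_subset_affCl3 _ hπ, pall_subset_pos1 hπ⟩
  have hf2 : Pall ⊆ R.f alpha2 := by
    intro π hπ
    exact hv1 t3 alpha2 a3mem a2mem e32 ⟨pall_subset_affCl3 _ hπ, pall_subset_pos2 hπ⟩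
  refine ⟨e31, e32, e21, hf1, hf2, ?_⟩
  exact hv3 _ _ a1mem a2mem
    (prec_12 _ (hf1 (Or.inl rfl)) (hf1 (Or.inr (Or.inl rfl))) (hf1 (Or.inr (Or.inr rfl))))

/-- No valid restriction system needs an edge into `α3`. -/
lemma no_edge_into_3 {R : RestrSys} (h : IsMinimalRS SigmaPrime R) (x : Constraint) :
    ¬ R.E x alpha3 := by
  intro hE
  have hv : RestrSys.valid SigmaPrime ⟨fun _ b => b ≠ alpha3, fun _ => Set.univ⟩ :=
    ⟨fun _ _ _ _ _ => Set.subset_univ _, fun _ _ _ _ _ => Set.subset_univ _,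
     fun α β _ _ hp => by rintro rfl; exact not_prec_3 _ _ hp⟩
  exact (h.2 _ hv).1 x alpha3 hE rfl



lemma rtg_ne3 {R : RestrSys} (h : IsMinimalRS SigmaPrime R) {α β : Constraint}
    (hα : α ≠ alpha3) (hr : Relation.ReflTransGen (edgeOn SigmaPrime R.E) α β) :
    β ≠ alpha3 := by
  induction hr with
  | refl => exact hα
  | tail h1 h2 ih =>
    rintro rfl
    exact no_edge_into_3 h _ h2.2.2

lemma scc1 {R : RestrSys} (h : IsMinimalRS SigmaPrime R) :
    sccOf SigmaPrime R.E alpha1 = {alpha1, alpha2} := by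
  obtain ⟨e31, e32, e21, hf1, hf2, e12⟩ := forced h.1
  ext β
  constructor
  · rintro ⟨hβS, h1β, -⟩
    have hne := rtg_ne3 h a13 h1β
    rcases hβS with rfl | rfl | rfl
    · exact Or.inl rfl
    · exact Or.inr rfl
    · exact absurd rfl hne
  · rintro (rfl | rfl)
    · exact ⟨a1mem, .refl, .refl⟩
    · exact ⟨a2mem, .single ⟨a1mem, a2mem, e12⟩, .single ⟨a2mem, a1mem, e21⟩⟩

lemma scc2 {R : RestrSys} (h : IsMinimalRS SigmaPrime R) :
    sccOf SigmaPrime R.E alpha2 = {alpha1, alpha2} := by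
  obtain ⟨e31, e32, e21, hf1, hf2, e12⟩ := forced h.1
  ext β
  constructor
  · rintro ⟨hβS, h1β, -⟩
    have hne := rtg_ne3 h a23 h1β
    rcases hβS with rfl | rfl | rfl
    · exact Or.inl rfl
    · exact Or.inr rfl
    · exact absurd rfl hne
  · rintro (rfl | rfl)
    · exact ⟨a1mem, .single ⟨a2mem, a1mem, e21⟩, .single ⟨a1mem, a2mem, e12⟩⟩
    · exact ⟨a2mem, .refl, .refl⟩

lemma mem_sccs {R : RestrSys} (h : IsMinimalRS SigmaPrime R) :
    ({alpha1, alpha2} : Set Constraint) ∈ SCCs SigmaPrime R.E := by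
  obtain ⟨e31, e32, e21, hf1, hf2, e12⟩ := forced h.1
  exact ⟨alpha1, a1mem,
    Relation.TransGen.tail (Relation.TransGen.single ⟨a1mem, a2mem, e12⟩)
      ⟨a2mem, a1mem, e21⟩, (scc1 h).symm⟩

lemma sccs_eq {R : RestrSys} (h : IsMinimalRS SigmaPrime R) :
    ∀ C ∈ SCCs SigmaPrime R.E, C = ({alpha1, alpha2} : Set Constraint) := by
  rintro C ⟨α, hαS, hT, rfl⟩
  rcases hαS with rfl | rfl | rfl
  · exact scc1 h
  · exact scc2 h
  · exfalso
    cases hT with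
    | single h' => exact no_edge_into_3 h _ h'.2.2
    | tail _ h' => exact no_edge_into_3 h _ h'.2.2

/-! ### The component `{α1, α2}` -/

lemma valid_R1 : RestrSys.valid {alpha1, alpha2}
    ⟨fun x y => x = alpha2 ∧ y = alpha1,
     fun x => if x = alpha1 then Epos else ∅⟩ := by
  refine ⟨?_, ?_, ?_⟩
  · rintro t β ht hβ ⟨hta, rfl⟩
    have ht2 : t = t2 := by
      rw [a2_eq] at hta
      injection hta
    subst ht2
    dsimp only
    rw [if_pos rfl]
    exact fun π hπ => affCl2_subset_Epos _ hπ.1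
  · rintro e β (h | h) hβ hE
    · rw [a1_eq] at h; exact Constraint.noConfusion h
    · rw [show (alpha2 : Constraint) = .tgd t2 from rfl] at h
      exact Constraint.noConfusion h
  · rintro α β (rfl | rfl) (rfl | rfl) hp <;> dsimp only at hp ⊢
    · rw [if_pos rfl] at hp
      exact absurd hp (not_prec_11 _)
    · rw [if_pos rfl] at hp
      exact absurd hp not_prec_12E
    · exact ⟨rfl, rfl⟩
    · rw [if_neg (Ne.symm a12)] at hp
      exact absurd hp (not_prec_22 _)

lemma sccs_C_empty {R' : RestrSys} (h : IsMinimalRS {alpha1, alpha2} R') :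
    SCCs {alpha1, alpha2} R'.E = ∅ := by
  have hle := (h.2 _ valid_R1).1
  have key : ∀ x y : Constraint, Relation.TransGen (edgeOn {alpha1, alpha2} R'.E) x y →
      x = alpha2 ∧ y = alpha1 := by
    intro x y hxy
    induction hxy with
    | single h' => exact hle _ _ h'.2.2
    | tail h1 h2 ih => exact ⟨ih.1, (hle _ _ h2.2.2).2⟩
  ext C'
  simp only [Set.mem_empty_iff_false, iff_false]
  rintro ⟨α, hα, hT, -⟩
  have := key _ _ hT
  exact a12 (this.2.symm.trans this.1)

lemma not_partmem_C : ∀ S', ¬ PartMem {alpha1, alpha2} S' := by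
  intro S' h
  cases h with
  | base S R hmin hscc =>
    have h1 : ({alpha1, alpha2} : Set Constraint) ∈ SCCs {alpha1, alpha2} R.E := by
      rw [hscc]; rfl
    rw [sccs_C_empty hmin] at h1
    exact h1
  | step S R C S'' hmin hne hC hp =>
    rw [sccs_C_empty hmin] at hC
    exact hC

lemma not_partmem_Sigma : ∀ S', ¬ PartMem SigmaPrime S' := by
  intro S' h
  cases h with
  | base S R hmin hscc =>
    have h1 := mem_sccs hmin
    rw [hscc] at h1
    have h3 : alpha3 ∈ ({alpha1, alpha2} : Set Constraint) := h1 ▸ a3mem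
    rcases h3 with h3 | h3
    · exact a13 h3.symm
    · exact a23 h3.symm
  | step S R C S'' hmin hne hC hp =>
    rw [sccs_eq hmin C hC] at hp
    exact not_partmem_C _ hp



lemma occ_head2 : occursAt t2.head 2 ((Erel, 1) : Pos) :=
  ⟨⟨Erel, [Term.var 1, Term.var 2]⟩, by simp [t2], rfl, rfl⟩

lemma affected_E1 : Affected {alpha1, alpha2} ((Erel, 1) : Pos) :=
  Affected.ex t2 2 _ (Or.inr rfl) ((exVars2_iff 2).mpr rfl) occ_head2

lemma not_safe_C : ¬ IsSafe {alpha1, alpha2} := by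
  intro h
  apply h
  refine ⟨(Erel, 1), (Erel, 1), ?_, Relation.ReflTransGen.refl⟩
  refine ⟨t2, Or.inr rfl, 1, ?_, ?_, ?_, ?_, 2, (exVars2_iff 2).mpr rfl, occ_head2⟩
  · exact (varsBody_iff 1).mpr (Or.inr rfl)
  · simp [t2, varsOf, Atom.vars]
  · exact ⟨⟨Erel, [Term.var 0, Term.var 1]⟩, by simp [t2], rfl, rfl⟩
  · rintro π ⟨A, hA, hrel, hidx⟩
    simp only [t2, List.mem_cons, List.not_mem_nil, or_false] at hA
    rcases hA with rfl | rfl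
    · rw [getElem?_single] at hidx
      exact absurd hidx.2 (by simp)
    · rw [getElem?_pair] at hidx
      rcases hidx with ⟨-, hv⟩ | ⟨h2, -⟩
      · exact absurd hv (by simp)
      · have hπ : π = ((Erel, 1) : Pos) := Prod.ext hrel.symm h2
        rw [hπ]
        exact affected_E1

/-! ### The minimal restriction system of `Σ'` -/

def Rmin : RestrSys :=
  ⟨fun x y => (x = alpha3 ∧ (y = alpha1 ∨ y = alpha2)) ∨ (x = alpha1 ∧ y = alpha2) ∨
      (x = alpha2 ∧ y = alpha1),
   fun x => if x = alpha1 ∨ x = alpha2 then Pall else ∅⟩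

lemma valid_Rmin : Rmin.valid SigmaPrime := by
  refine ⟨?_, ?_, ?_⟩
  · rintro t β ht hβ (⟨-, hy⟩ | ⟨-, rfl⟩ | ⟨-, rfl⟩)
    · dsimp only [Rmin]
      rw [if_pos hy]
      rcases hy with rfl | rfl
      · exact fun π hπ => pos1_subset_pall hπ.2
      · exact fun π hπ => pos2_subset_pall hπ.2
    · dsimp only [Rmin]
      rw [if_pos (Or.inr rfl)]
      exact fun π hπ => pos2_subset_pall hπ.2
    · dsimp only [Rmin]
      rw [if_pos (Or.inl rfl)]
      exact fun π hπ => pos1_subset_pall hπ.2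
  · rintro e β (h | h | h) hβ hE
    · rw [a1_eq] at h; exact Constraint.noConfusion h
    · rw [a2_eq] at h; exact Constraint.noConfusion h
    · rw [a3_eq] at h; exact Constraint.noConfusion h
  · rintro α β (rfl | rfl | rfl) (rfl | rfl | rfl) hp <;> dsimp only [Rmin] at hp ⊢
    · exact absurd hp (not_prec_11 _)
    · exact Or.inr (Or.inl ⟨rfl, rfl⟩)
    · exact absurd hp (not_prec_3 _ _)
    · exact Or.inr (Or.inr ⟨rfl, rfl⟩)
    · exact absurd hp (not_prec_22 _)
    · exact absurd hp (not_prec_3 _ _)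
    · exact Or.inl ⟨rfl, Or.inl rfl⟩
    · exact Or.inl ⟨rfl, Or.inr rfl⟩
    · exact absurd hp (not_prec_3 _ _)

lemma isMinimal_Rmin : IsMinimalRS SigmaPrime Rmin := by
  refine ⟨valid_Rmin, ?_⟩
  intro R' hv
  obtain ⟨e31, e32, e21, hf1, hf2, e12⟩ := forced hv
  constructor
  · rintro a b (⟨rfl, rfl | rfl⟩ | ⟨rfl, rfl⟩ | ⟨rfl, rfl⟩) <;> assumption
  · intro a π hπ
    dsimp only [Rmin] at hπ
    by_cases h : a = alpha1 ∨ a = alpha2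
    · rw [if_pos h] at hπ
      rcases h with rfl | rfl
      · exact hf1 hπ
      · exact hf2 hπ
    · rw [if_neg h] at hπ
      exact absurd hπ (Set.notMem_empty π)


/-- Lemma, second bullet. The concrete set `Σ' = {α1,α2,α3}`
satisfies `part(Σ') = ∅` (hence `Σ'` is inductively restricted), while the minimal
restriction system of `Σ'` contains the strongly connected component `{α1,α2}`,
which is not safe (hence `Σ'` is not safely restricted). -/
theorem inductively_restricted_but_not_safely_restricted :
    (∀ S', ¬ PartMem SigmaPrime S') ∧
    InductivelyRestricted SigmaPrime ∧
    (∀ R, IsMinimalRS SigmaPrime R →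
      ({alpha1, alpha2} : Set Constraint) ∈ SCCs SigmaPrime R.E) ∧
    ¬ IsSafe {alpha1, alpha2} ∧
    ¬ SafelyRestricted SigmaPrime := by
  refine ⟨not_partmem_Sigma, ?_, ?_, not_safe_C, ?_⟩
  · intro S' h
    exact absurd h (not_partmem_Sigma S')
  · intro R hmin
    exact mem_sccs hmin
  · intro h
    exact not_safe_C (h Rmin isMinimal_Rmin _ (mem_sccs isMinimal_Rmin))

end StopChase
end

section
/- For each positive natural number k there exist a constraint set Σ_k and an instance I_k such that (a) both Σ_k and the subset of constraints of Σ_k that are not (I_k,Σ_k)-irrelevant are not inductively restricted, and (b) every chase sequence for I_k with Σ_k is (k-1)-cyclic but not k-cyclic. -/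
set_option maxHeartbeats 1000000

namespace StopChase

/-! ## Construction for Proposition 2 -/

namespace PayGo

def Qr : RelSym := (0,2)
def Mrel : RelSym := (1,2)
def g : Val := .const 0
def c (i : ℕ) : Val := .const (i+1)
def fQ (x y : Val) : Fact := ⟨Qr, [x,y]⟩
def fM (x y : Val) : Fact := ⟨Mrel, [x,y]⟩

def t1 : TGD := ⟨[⟨Qr, [.var 0, .var 1]⟩, ⟨Mrel, [.var 0, .var 2]⟩],
                 [⟨Qr, [.var 2, .var 3]⟩, ⟨Mrel, [.var 3, .var 3]⟩]⟩
def t3 : TGD := ⟨[⟨Mrel, [.var 0, .var 1]⟩], [⟨Mrel, [.const 0, .var 1]⟩]⟩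
def T1 : Constraint := .tgd t1
def T3 : Constraint := .tgd t3
def Sk : Set Constraint := {T1, T3}

def St (k j : ℕ) (m : ℕ → Val) (A B : Set ℕ) : Set Fact :=
  {F | F = fQ (c 0) (c 0) ∨ (∃ i, i < k ∧ F = fM (c i) (c (i+1)))
     ∨ (∃ i, i < j ∧ F = fQ (c (i+1)) (m i)) ∨ (∃ i, i < j ∧ F = fM (m i) (m i))
     ∨ (∃ i, i ∈ A ∧ F = fM g (c (i+1))) ∨ (∃ i, i ∈ B ∧ F = fM g (m i))}

def Ik (k : ℕ) : Set Fact := St k 0 (fun _ => g) ∅ ∅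

lemma St_zero (k : ℕ) (m : ℕ → Val) : St k 0 m ∅ ∅ = Ik k := by
  ext F; simp [St, Ik]

/-! ### basic value lemmas -/

lemma isNull_ne_const {v : Val} (h : v.isNull) (n : ℕ) : v ≠ .const n := by
  cases v with
  | const m => simp [Val.isNull] at h
  | null m => simp

lemma const_ne_isNull {v : Val} (h : v.isNull) (n : ℕ) : Val.const n ≠ v :=
  (isNull_ne_const h n).symm

lemma g_ne_c (i : ℕ) : g ≠ c i := by simp [g, c]
lemma c_inj {i j : ℕ} (h : c i = c j) : i = j := by
  simpa [c] using h

/-! ### variables of the constraints -/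

lemma mem_varsOf_t1body (x : ℕ) : x ∈ varsOf t1.body ↔ x = 0 ∨ x = 1 ∨ x = 2 := by
  simp [varsOf, t1, Atom.vars]; tauto

lemma mem_varsOf_t1head (x : ℕ) : x ∈ varsOf t1.head ↔ x = 2 ∨ x = 3 := by
  simp [varsOf, t1, Atom.vars]

lemma mem_varsOf_t3body (x : ℕ) : x ∈ varsOf t3.body ↔ x = 0 ∨ x = 1 := by
  simp [varsOf, t3, Atom.vars]

lemma mem_varsOf_t3head (x : ℕ) : x ∈ varsOf t3.head ↔ x = 1 := by
  simp [varsOf, t3, Atom.vars]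

lemma mem_exVars_t1 (x : ℕ) : x ∈ t1.exVars ↔ x = 3 := by
  simp [TGD.exVars, mem_varsOf_t1body, mem_varsOf_t1head]
  omega

lemma mem_exVars_t3 (x : ℕ) : x ∈ t3.exVars ↔ False := by
  simp [TGD.exVars, mem_varsOf_t3body, mem_varsOf_t3head]
  omega

end PayGo

namespace PayGo

lemma bodyHolds_t1body (I : Set Fact) (ν : ℕ → Val) :
    bodyHolds I t1.body ν ↔ fQ (ν 0) (ν 1) ∈ I ∧ fM (ν 0) (ν 2) ∈ I := by
  simp [bodyHolds, t1, Atom.inst, Term.eval, fQ, fM]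

lemma bodyHolds_t1head (I : Set Fact) (ν : ℕ → Val) :
    bodyHolds I t1.head ν ↔ fQ (ν 2) (ν 3) ∈ I ∧ fM (ν 3) (ν 3) ∈ I := by
  simp [bodyHolds, t1, Atom.inst, Term.eval, fQ, fM]

lemma bodyHolds_t3body (I : Set Fact) (ν : ℕ → Val) :
    bodyHolds I t3.body ν ↔ fM (ν 0) (ν 1) ∈ I := by
  simp [bodyHolds, t3, Atom.inst, Term.eval, fM]

lemma bodyHolds_t3head (I : Set Fact) (ν : ℕ → Val) :
    bodyHolds I t3.head ν ↔ fM g (ν 1) ∈ I := by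
  simp [bodyHolds, t3, Atom.inst, Term.eval, fM, g]

lemma headSet_t1 (ν' : ℕ → Val) :
    {F | ∃ A ∈ t1.head, F = A.inst ν'} = {F | F = fQ (ν' 2) (ν' 3) ∨ F = fM (ν' 3) (ν' 3)} := by
  ext F; simp [t1, Atom.inst, Term.eval, fQ, fM]

lemma headSet_t3 (ν' : ℕ → Val) :
    {F | ∃ A ∈ t3.head, F = A.inst ν'} = {F | F = fM g (ν' 1)} := by
  ext F; simp [t3, Atom.inst, Term.eval, fM, g]

lemma t1_satAt_iff (I : Set Fact) (ν : ℕ → Val) :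
    T1.satAt I ν ↔
      ((fQ (ν 0) (ν 1) ∈ I ∧ fM (ν 0) (ν 2) ∈ I) →
        ∃ w, fQ (ν 2) w ∈ I ∧ fM w w ∈ I) := by
  show (Constraint.tgd t1).satAt I ν ↔ _
  simp only [Constraint.satAt]
  constructor
  · intro h hb
    obtain ⟨ν', ha, hh⟩ := h ((bodyHolds_t1body I ν).2 hb)
    rw [bodyHolds_t1head] at hh
    have h2 : ν' 2 = ν 2 := ha 2 ((mem_varsOf_t1body 2).2 (by simp))
    exact ⟨ν' 3, by rwa [h2] at hh⟩
  · intro h hb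
    obtain ⟨w, hw⟩ := h ((bodyHolds_t1body I ν).1 hb)
    refine ⟨fun v => if v = 3 then w else ν v, fun v hv => ?_, ?_⟩
    · rw [mem_varsOf_t1body] at hv
      have : v ≠ 3 := by omega
      simp [this]
    · rw [bodyHolds_t1head]; simpa using hw

lemma t3_satAt_iff (I : Set Fact) (ν : ℕ → Val) :
    T3.satAt I ν ↔ (fM (ν 0) (ν 1) ∈ I → fM g (ν 1) ∈ I) := by
  show (Constraint.tgd t3).satAt I ν ↔ _
  simp only [Constraint.satAt]
  constructor
  · intro h hb
    obtain ⟨ν', ha, hh⟩ := h ((bodyHolds_t3body I ν).2 hb)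
    rw [bodyHolds_t3head] at hh
    rwa [ha 1 ((mem_varsOf_t3body 1).2 (by simp))] at hh
  · intro h hb
    exact ⟨ν, fun v _ => rfl, (bodyHolds_t3head I ν).2 (h ((bodyHolds_t3body I ν).1 hb))⟩

lemma t1_chaseStep_iff (ν : ℕ → Val) (I J : Set Fact) :
    T1.chaseStep ν I J ↔
      ¬ T1.satAt I ν ∧ ∃ n : Val, n.isNull ∧ n ∉ adom I ∧
        J = I ∪ {F | F = fQ (ν 2) n ∨ F = fM n n} := by
  show (Constraint.tgd t1).chaseStep ν I J ↔ _
  simp only [Constraint.chaseStep]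
  constructor
  · rintro ⟨hns, ν', ha, hex, -, hJ⟩
    have h3 := hex 3 ((mem_exVars_t1 3).2 rfl)
    refine ⟨hns, ν' 3, h3.1, h3.2, ?_⟩
    rw [hJ, headSet_t1, ha 2 ((mem_varsOf_t1body 2).2 (by simp))]
  · rintro ⟨hns, n, hn1, hn2, hJ⟩
    refine ⟨hns, fun v => if v = 3 then n else ν v, fun v hv => ?_, fun v hv => ?_,
      fun v hv w hw _ => ?_, ?_⟩
    · rw [mem_varsOf_t1body] at hv
      have : v ≠ 3 := by omega
      simp [this]
    · rw [mem_exVars_t1] at hv; subst hv; simpa using ⟨hn1, hn2⟩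
    · rw [mem_exVars_t1] at hv; rw [mem_exVars_t1] at hw; rw [hv, hw]
    · rw [headSet_t1]; simpa using hJ

lemma t3_chaseStep_iff (ν : ℕ → Val) (I J : Set Fact) :
    T3.chaseStep ν I J ↔ ¬ T3.satAt I ν ∧ J = I ∪ {F | F = fM g (ν 1)} := by
  show (Constraint.tgd t3).chaseStep ν I J ↔ _
  simp only [Constraint.chaseStep]
  constructor
  · rintro ⟨hns, ν', ha, -, -, hJ⟩
    refine ⟨hns, ?_⟩
    rw [hJ, headSet_t3, ha 1 ((mem_varsOf_t3body 1).2 (by simp))]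
  · rintro ⟨hns, hJ⟩
    refine ⟨hns, ν, fun v _ => rfl, fun v hv => absurd hv (by simp [mem_exVars_t3]),
      fun v hv => absurd hv (by simp [mem_exVars_t3]), by rw [headSet_t3]; exact hJ⟩

end PayGo

namespace PayGo

lemma fQ_ne_fM (x y a b : Val) : fQ x y ≠ fM a b := by
  simp [fQ, fM, Qr, Mrel]

lemma fQ_inj {x y a b : Val} : fQ x y = fQ a b ↔ x = a ∧ y = b := by
  simp [fQ]

lemma fM_inj {x y a b : Val} : fM x y = fM a b ↔ x = a ∧ y = b := by
  simp [fM]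

lemma fQ_mem_St {x y : Val} {k j : ℕ} {m : ℕ → Val} {A B : Set ℕ} :
    fQ x y ∈ St k j m A B ↔
      (x = c 0 ∧ y = c 0) ∨ ∃ i, i < j ∧ x = c (i+1) ∧ y = m i := by
  simp only [St, Set.mem_setOf_eq, fQ_inj]
  constructor
  · rintro (h | ⟨i, hi, h⟩ | ⟨i, hi, h⟩ | ⟨i, hi, h⟩ | ⟨i, hi, h⟩ | ⟨i, hi, h⟩)
    · exact Or.inl h
    all_goals first
      | (exact absurd h (fQ_ne_fM _ _ _ _))
      | (exact Or.inr ⟨i, hi, h⟩)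
  · rintro (⟨h1, h2⟩ | ⟨i, hi, h1, h2⟩)
    · exact Or.inl ⟨h1, h2⟩
    · exact Or.inr (Or.inr (Or.inl ⟨i, hi, h1, h2⟩))

lemma fM_mem_St {x y : Val} {k j : ℕ} {m : ℕ → Val} {A B : Set ℕ} :
    fM x y ∈ St k j m A B ↔
      (∃ i, i < k ∧ x = c i ∧ y = c (i+1)) ∨ (∃ i, i < j ∧ x = m i ∧ y = m i) ∨
      (∃ i, i ∈ A ∧ x = g ∧ y = c (i+1)) ∨ (∃ i, i ∈ B ∧ x = g ∧ y = m i) := by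
  simp only [St, Set.mem_setOf_eq, fM_inj]
  constructor
  · rintro (h | ⟨i, hi, h⟩ | ⟨i, hi, h⟩ | ⟨i, hi, h⟩ | ⟨i, hi, h⟩ | ⟨i, hi, h⟩)
    · exact absurd h.symm (fQ_ne_fM _ _ _ _)
    · exact Or.inl ⟨i, hi, h⟩
    · exact absurd h.symm (fQ_ne_fM _ _ _ _)
    · exact Or.inr (Or.inl ⟨i, hi, h⟩)
    · exact Or.inr (Or.inr (Or.inl ⟨i, hi, h⟩))
    · exact Or.inr (Or.inr (Or.inr ⟨i, hi, h⟩))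
  · rintro (⟨i, hi, h1, h2⟩ | ⟨i, hi, h1, h2⟩ | ⟨i, hi, h1, h2⟩ | ⟨i, hi, h1, h2⟩)
    · exact Or.inr (Or.inl ⟨i, hi, h1, h2⟩)
    · exact Or.inr (Or.inr (Or.inr (Or.inl ⟨i, hi, h1, h2⟩)))
    · exact Or.inr (Or.inr (Or.inr (Or.inr (Or.inl ⟨i, hi, h1, h2⟩))))
    · exact Or.inr (Or.inr (Or.inr (Or.inr (Or.inr ⟨i, hi, h1, h2⟩))))

lemma m_mem_adom_St {k j i : ℕ} {m : ℕ → Val} {A B : Set ℕ} (hi : i < j) :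
    m i ∈ adom (St k j m A B) :=
  ⟨fM (m i) (m i), fM_mem_St.2 (Or.inr (Or.inl ⟨i, hi, rfl, rfl⟩)), by simp [fM]⟩

lemma cS_mem_adom_St {k j i : ℕ} {m : ℕ → Val} {A B : Set ℕ} (hi : i < k) :
    c (i+1) ∈ adom (St k j m A B) :=
  ⟨fM (c i) (c (i+1)), fM_mem_St.2 (Or.inl ⟨i, hi, rfl, rfl⟩), by simp [fM]⟩

lemma null_adom_St {k j : ℕ} {m : ℕ → Val} {A B : Set ℕ} {v : Val}
    (hB : B ⊆ Set.Iio j) (hv : v ∈ adom (St k j m A B)) (hnull : v.isNull) :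
    ∃ i, i < j ∧ v = m i := by
  obtain ⟨F, hF, hvF⟩ := hv
  rcases hF with h | ⟨i, hi, h⟩ | ⟨i, hi, h⟩ | ⟨i, hi, h⟩ | ⟨i, hi, h⟩ | ⟨i, hi, h⟩
  · subst h; simp [fQ] at hvF
    exact absurd hvF (isNull_ne_const hnull _)
  · subst h; simp [fM] at hvF
    rcases hvF with h | h <;> exact absurd h (isNull_ne_const hnull _)
  · subst h; simp [fQ] at hvF
    rcases hvF with h | h
    · exact absurd h (isNull_ne_const hnull _)
    · exact ⟨i, hi, h⟩
  · subst h; simp [fM] at hvF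
    exact ⟨i, hi, hvF⟩
  · subst h; simp [fM, g, c] at hvF
    rcases hvF with h | h <;> exact absurd h (isNull_ne_const hnull _)
  · subst h; simp [fM, g] at hvF
    rcases hvF with h | h
    · exact absurd h (isNull_ne_const hnull _)
    · exact ⟨i, hB hi, h⟩

end PayGo

namespace PayGo

def chi (m : ℕ → Val) : ℕ → Val
  | 0 => c 0
  | j+1 => m j

lemma isNull_ne_c {v : Val} (h : v.isNull) (n : ℕ) : v ≠ c n :=
  isNull_ne_const h (n+1)

lemma c_ne_isNull {v : Val} (h : v.isNull) (n : ℕ) : c n ≠ v :=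
  (isNull_ne_c h n).symm

lemma body_t1_mem {k j : ℕ} {m : ℕ → Val} {A B : Set ℕ} (hjk : j < k) :
    fQ (c j) (chi m j) ∈ St k j m A B ∧ fM (c j) (c (j+1)) ∈ St k j m A B := by
  constructor
  · cases j with
    | zero => exact fQ_mem_St.2 (Or.inl ⟨rfl, rfl⟩)
    | succ j' => exact fQ_mem_St.2 (Or.inr ⟨j', Nat.lt_succ_self j', rfl, rfl⟩)
  · exact fM_mem_St.2 (Or.inl ⟨j, hjk, rfl, rfl⟩)

lemma no_head_t1 {k j : ℕ} {m : ℕ → Val} {A B : Set ℕ} {w : Val} (hjk : j ≤ k)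
    (h : fQ (c (j+1)) w ∈ St k j m A B) : False := by
  rcases fQ_mem_St.1 h with ⟨h1, -⟩ | ⟨i, hi, h1, -⟩
  · exact absurd (c_inj h1) (by omega)
  · exact absurd (c_inj h1) (by omega)

lemma t1_violate_intro {k j : ℕ} {m : ℕ → Val} {A B : Set ℕ} {ν : ℕ → Val}
    (hjk : j < k) (h0 : ν 0 = c j) (h1 : ν 1 = chi m j) (h2 : ν 2 = c (j+1)) :
    ¬ T1.satAt (St k j m A B) ν := by
  rw [t1_satAt_iff]
  intro h
  obtain ⟨w, hw, -⟩ := h (by rw [h0, h1, h2]; exact body_t1_mem hjk)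
  rw [h2] at hw
  exact no_head_t1 hjk.le hw

lemma t1_violate_elim {k j : ℕ} {m : ℕ → Val} {A B : Set ℕ} {ν : ℕ → Val}
    (hB : B ⊆ Set.Iio j) (hjk : j ≤ k) (hnulls : ∀ i < j, (m i).isNull)
    (h : ¬ T1.satAt (St k j m A B) ν) :
    j < k ∧ ν 0 = c j ∧ ν 1 = chi m j ∧ ν 2 = c (j+1) := by
  rw [t1_satAt_iff] at h
  push_neg at h
  obtain ⟨⟨hbQ, hbM⟩, hno⟩ := h
  rcases fM_mem_St.1 hbM with ⟨i, hik, h0, h2⟩ | ⟨i, hij, h0, h2⟩ | ⟨i, -, h0, -⟩ | ⟨i, -, h0, -⟩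
  · -- ν 0 = c i, ν 2 = c (i+1), i < k
    have hij : ¬ i < j := by
      intro hij
      exact hno (m i) (by rw [h2]; exact fQ_mem_St.2 (Or.inr ⟨i, hij, rfl, rfl⟩))
        (fM_mem_St.2 (Or.inr (Or.inl ⟨i, hij, rfl, rfl⟩)))
    rw [h0] at hbQ
    rcases fQ_mem_St.1 hbQ with ⟨hc, h1⟩ | ⟨i', hi'j, hc, h1⟩
    · have : i = 0 := c_inj hc
      subst this
      have : j = 0 := by omega
      subst this
      exact ⟨hik, h0, by rw [h1]; rfl, h2⟩
    · have hii' : i = i' + 1 := c_inj hc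
      have : i = j := by omega
      subst this
      refine ⟨hik, h0, ?_, h2⟩
      rw [h1, hii']
      rfl
  · rw [h0] at hbQ
    rcases fQ_mem_St.1 hbQ with ⟨hc, -⟩ | ⟨i', -, hc, -⟩
    · exact absurd hc (isNull_ne_c (hnulls i hij) 0)
    · exact absurd hc (isNull_ne_c (hnulls i hij) _)
  · rw [h0] at hbQ
    rcases fQ_mem_St.1 hbQ with ⟨hc, -⟩ | ⟨i', -, hc, -⟩ <;> simp [g, c] at hc
  · rw [h0] at hbQ
    rcases fQ_mem_St.1 hbQ with ⟨hc, -⟩ | ⟨i', -, hc, -⟩ <;> simp [g, c] at hc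

lemma t3_violate_elim {k j : ℕ} {m : ℕ → Val} {A B : Set ℕ} {ν : ℕ → Val}
    (h : ¬ T3.satAt (St k j m A B) ν) :
    (∃ i, i < k ∧ i ∉ A ∧ ν 0 = c i ∧ ν 1 = c (i+1)) ∨
    (∃ i, i < j ∧ i ∉ B ∧ ν 0 = m i ∧ ν 1 = m i) := by
  rw [t3_satAt_iff] at h
  push_neg at h
  obtain ⟨hb, hnh⟩ := h
  rcases fM_mem_St.1 hb with ⟨i, hik, h0, h1⟩ | ⟨i, hij, h0, h1⟩ | ⟨i, hiA, h0, h1⟩ | ⟨i, hiB, h0, h1⟩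
  · refine Or.inl ⟨i, hik, fun hiA => ?_, h0, h1⟩
    exact hnh (by rw [h1]; exact fM_mem_St.2 (Or.inr (Or.inr (Or.inl ⟨i, hiA, rfl, rfl⟩))))
  · refine Or.inr ⟨i, hij, fun hiB => ?_, h0, h1⟩
    exact hnh (by rw [h1]; exact fM_mem_St.2 (Or.inr (Or.inr (Or.inr ⟨i, hiB, rfl, rfl⟩))))
  · refine absurd ?_ hnh
    rw [h1]
    exact fM_mem_St.2 (Or.inr (Or.inr (Or.inl ⟨i, hiA, rfl, rfl⟩)))
  · refine absurd ?_ hnh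
    rw [h1]
    exact fM_mem_St.2 (Or.inr (Or.inr (Or.inr ⟨i, hiB, rfl, rfl⟩)))

lemma t3_violate_introA {k j : ℕ} {m : ℕ → Val} {A B : Set ℕ} {ν : ℕ → Val} {i : ℕ}
    (hB : B ⊆ Set.Iio j) (hnulls : ∀ i' < j, (m i').isNull)
    (hik : i < k) (hiA : i ∉ A) (h0 : ν 0 = c i) (h1 : ν 1 = c (i+1)) :
    ¬ T3.satAt (St k j m A B) ν := by
  rw [t3_satAt_iff]
  intro h
  have hmem := h (by rw [h0, h1]; exact fM_mem_St.2 (Or.inl ⟨i, hik, rfl, rfl⟩))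
  rw [h1] at hmem
  rcases fM_mem_St.1 hmem with ⟨i', -, hg, -⟩ | ⟨i', hi'j, hg, -⟩ | ⟨i', hi'A, -, hc⟩ | ⟨i', hB', -, hc⟩
  · simp [g, c] at hg
  · exact absurd hg.symm (isNull_ne_const (hnulls i' hi'j) _)
  · have : i = i' := by have := c_inj hc; omega
    rw [this] at hiA; exact hiA hi'A
  · exact absurd hc (c_ne_isNull (hnulls i' (hB hB')) _)

lemma t3_violate_introB {k j : ℕ} {m : ℕ → Val} {A B : Set ℕ} {ν : ℕ → Val} {i : ℕ}
    (hB : B ⊆ Set.Iio j) (hnulls : ∀ i' < j, (m i').isNull)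
    (hdist : ∀ i i', i < j → i' < j → m i = m i' → i = i')
    (hij : i < j) (hiB : i ∉ B) (h0 : ν 0 = m i) (h1 : ν 1 = m i) :
    ¬ T3.satAt (St k j m A B) ν := by
  rw [t3_satAt_iff]
  intro h
  have hmem := h (by rw [h0, h1]; exact fM_mem_St.2 (Or.inr (Or.inl ⟨i, hij, rfl, rfl⟩)))
  rw [h1] at hmem
  rcases fM_mem_St.1 hmem with ⟨i', -, hg, -⟩ | ⟨i', hi'j, hg, -⟩ | ⟨i', -, -, hc⟩ | ⟨i', hB', -, hc⟩
  · simp [g, c] at hg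
  · exact absurd hg.symm (isNull_ne_const (hnulls i' hi'j) _)
  · exact absurd hc (isNull_ne_c (hnulls i hij) _)
  · rw [hdist i i' hij (hB hB') hc] at hiB; exact hiB hB'

end PayGo

namespace PayGo

lemma St_succ {k j : ℕ} {m : ℕ → Val} {A B : Set ℕ} {n : Val} (hB : B ⊆ Set.Iio j) :
    St k j m A B ∪ {F | F = fQ (c (j+1)) n ∨ F = fM n n}
      = St k (j+1) (fun t => if t = j then n else m t) A B := by
  ext F
  simp only [Set.mem_union, St, Set.mem_setOf_eq]
  constructor
  · rintro ((h | ⟨i, hi, h⟩ | ⟨i, hi, h⟩ | ⟨i, hi, h⟩ | ⟨i, hi, h⟩ | ⟨i, hi, h⟩) | (h | h))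
    · exact Or.inl h
    · exact Or.inr (Or.inl ⟨i, hi, h⟩)
    · refine Or.inr (Or.inr (Or.inl ⟨i, Nat.lt_succ_of_lt hi, ?_⟩))
      rw [h]; simp [Nat.ne_of_lt hi]
    · refine Or.inr (Or.inr (Or.inr (Or.inl ⟨i, Nat.lt_succ_of_lt hi, ?_⟩)))
      rw [h]; simp [Nat.ne_of_lt hi]
    · exact Or.inr (Or.inr (Or.inr (Or.inr (Or.inl ⟨i, hi, h⟩))))
    · refine Or.inr (Or.inr (Or.inr (Or.inr (Or.inr ⟨i, hi, ?_⟩))))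
      rw [h]; simp [Nat.ne_of_lt (hB hi)]
    · refine Or.inr (Or.inr (Or.inl ⟨j, Nat.lt_succ_self j, ?_⟩))
      rw [h]; simp
    · refine Or.inr (Or.inr (Or.inr (Or.inl ⟨j, Nat.lt_succ_self j, ?_⟩)))
      rw [h]; simp
  · rintro (h | ⟨i, hi, h⟩ | ⟨i, hi, h⟩ | ⟨i, hi, h⟩ | ⟨i, hi, h⟩ | ⟨i, hi, h⟩)
    · exact Or.inl (Or.inl h)
    · exact Or.inl (Or.inr (Or.inl ⟨i, hi, h⟩))
    · rcases Nat.lt_succ_iff_lt_or_eq.1 hi with hi' | hi'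
      · refine Or.inl (Or.inr (Or.inr (Or.inl ⟨i, hi', ?_⟩)))
        rw [h]; simp [Nat.ne_of_lt hi']
      · subst hi'
        refine Or.inr (Or.inl ?_)
        rw [h]; simp
    · rcases Nat.lt_succ_iff_lt_or_eq.1 hi with hi' | hi'
      · refine Or.inl (Or.inr (Or.inr (Or.inr (Or.inl ⟨i, hi', ?_⟩))))
        rw [h]; simp [Nat.ne_of_lt hi']
      · subst hi'
        refine Or.inr (Or.inr ?_)
        rw [h]; simp
    · exact Or.inl (Or.inr (Or.inr (Or.inr (Or.inr (Or.inl ⟨i, hi, h⟩)))))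
    · refine Or.inl (Or.inr (Or.inr (Or.inr (Or.inr (Or.inr ⟨i, hi, ?_⟩)))))
      rw [h]; simp [Nat.ne_of_lt (hB hi)]

lemma St_addA {k j : ℕ} {m : ℕ → Val} {A B : Set ℕ} {i : ℕ} :
    St k j m A B ∪ {F | F = fM g (c (i+1))} = St k j m (insert i A) B := by
  ext F
  simp only [Set.mem_union, St, Set.mem_setOf_eq, Set.mem_insert_iff]
  constructor
  · rintro ((h | h | h | h | ⟨i', hi', h⟩ | h) | h)
    · exact Or.inl h
    · exact Or.inr (Or.inl h)
    · exact Or.inr (Or.inr (Or.inl h))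
    · exact Or.inr (Or.inr (Or.inr (Or.inl h)))
    · exact Or.inr (Or.inr (Or.inr (Or.inr (Or.inl ⟨i', Or.inr hi', h⟩))))
    · exact Or.inr (Or.inr (Or.inr (Or.inr (Or.inr h))))
    · exact Or.inr (Or.inr (Or.inr (Or.inr (Or.inl ⟨i, Or.inl rfl, h⟩))))
  · rintro (h | h | h | h | ⟨i', hi' | hi', h⟩ | h)
    · exact Or.inl (Or.inl h)
    · exact Or.inl (Or.inr (Or.inl h))
    · exact Or.inl (Or.inr (Or.inr (Or.inl h)))
    · exact Or.inl (Or.inr (Or.inr (Or.inr (Or.inl h))))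
    · subst hi'; exact Or.inr h
    · exact Or.inl (Or.inr (Or.inr (Or.inr (Or.inr (Or.inl ⟨i', hi', h⟩)))))
    · exact Or.inl (Or.inr (Or.inr (Or.inr (Or.inr (Or.inr h)))))

lemma St_addB {k j : ℕ} {m : ℕ → Val} {A B : Set ℕ} {i : ℕ} :
    St k j m A B ∪ {F | F = fM g (m i)} = St k j m A (insert i B) := by
  ext F
  simp only [Set.mem_union, St, Set.mem_setOf_eq, Set.mem_insert_iff]
  constructor
  · rintro ((h | h | h | h | h | ⟨i', hi', h⟩) | h)
    · exact Or.inl h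
    · exact Or.inr (Or.inl h)
    · exact Or.inr (Or.inr (Or.inl h))
    · exact Or.inr (Or.inr (Or.inr (Or.inl h)))
    · exact Or.inr (Or.inr (Or.inr (Or.inr (Or.inl h))))
    · exact Or.inr (Or.inr (Or.inr (Or.inr (Or.inr ⟨i', Or.inr hi', h⟩))))
    · exact Or.inr (Or.inr (Or.inr (Or.inr (Or.inr ⟨i, Or.inl rfl, h⟩))))
  · rintro (h | h | h | h | h | ⟨i', hi' | hi', h⟩)
    · exact Or.inl (Or.inl h)
    · exact Or.inl (Or.inr (Or.inl h))
    · exact Or.inl (Or.inr (Or.inr (Or.inl h)))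
    · exact Or.inl (Or.inr (Or.inr (Or.inr (Or.inl h))))
    · exact Or.inl (Or.inr (Or.inr (Or.inr (Or.inr (Or.inl h)))))
    · subst hi'; exact Or.inr h
    · exact Or.inl (Or.inr (Or.inr (Or.inr (Or.inr (Or.inr ⟨i', hi', h⟩)))))

lemma mem_Sk {α : Constraint} : α ∈ Sk ↔ α = T1 ∨ α = T3 := by
  simp [Sk]

lemma step_classify {k j : ℕ} {m : ℕ → Val} {A B : Set ℕ}
    (hjk : j ≤ k) (hB : B ⊆ Set.Iio j)
    (hnulls : ∀ i < j, (m i).isNull)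
    {α : Constraint} {ν : ℕ → Val} {J : Set Fact}
    (hα : α ∈ Sk) (hstep : α.chaseStep ν (St k j m A B) J) :
    (α = T1 ∧ j < k ∧ ν 0 = c j ∧ ν 1 = chi m j ∧ ν 2 = c (j+1) ∧
      ∃ n : Val, n.isNull ∧ n ∉ adom (St k j m A B) ∧
        J = St k (j+1) (fun t => if t = j then n else m t) A B) ∨
    (α = T3 ∧ ∃ i, i < k ∧ i ∉ A ∧ J = St k j m (insert i A) B) ∨
    (α = T3 ∧ ∃ i, i < j ∧ i ∉ B ∧ J = St k j m A (insert i B)) := by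
  rcases mem_Sk.1 hα with h | h <;> subst h
  · left
    rw [t1_chaseStep_iff] at hstep
    obtain ⟨hns, n, hn1, hn2, hJ⟩ := hstep
    obtain ⟨h1, h2, h3, h4⟩ := t1_violate_elim hB hjk hnulls hns
    refine ⟨rfl, h1, h2, h3, h4, n, hn1, hn2, ?_⟩
    rw [hJ, h4, St_succ hB]
  · right
    rw [t3_chaseStep_iff] at hstep
    obtain ⟨hns, hJ⟩ := hstep
    rcases t3_violate_elim hns with ⟨i, hik, hiA, h0, h1⟩ | ⟨i, hij, hiB, h0, h1⟩
    · left
      exact ⟨rfl, i, hik, hiA, by rw [hJ, h1, St_addA]⟩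
    · right
      exact ⟨rfl, i, hij, hiB, by rw [hJ, h1, St_addB]⟩

end PayGo

namespace PayGo

lemma get2 {α : Type} (x y v : α) (i : ℕ) :
    ([x, y] : List α)[i]? = some v ↔ (i = 0 ∧ x = v) ∨ (i = 1 ∧ y = v) := by
  match i with
  | 0 => simp [eq_comm]
  | 1 => simp [eq_comm]
  | (n+2) => simp

def piN : Set Pos := {(Qr,1), (Mrel,0), (Mrel,1)}
def QN : Set Pos := {(Qr,1)}

def medge (x y : Val) (L : Set Pos) : MEdge := ⟨(x, piN), T1, L, (y, piN)⟩

def VSet (j : ℕ) (m : ℕ → Val) : Set MNode := {p | ∃ t, t < j ∧ p = (m t, piN)}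

def ESet (j : ℕ) (m : ℕ → Val) : Set MEdge :=
  {e | ∃ a b, a < b ∧ b < j ∧ e = medge (m a) (m b) (if a + 1 = b then QN else ∅)}

lemma newNulls_T1 {k j : ℕ} {m : ℕ → Val} {A B : Set ℕ} {n : Val}
    (hB : B ⊆ Set.Iio j) (hn1 : n.isNull) (hn2 : n ∉ adom (St k j m A B)) :
    newNulls (St k j m A B) (St k (j+1) (fun t => if t = j then n else m t) A B) = {n} := by
  have hBj : B ⊆ Set.Iio (j+1) := fun i hi => Nat.lt_succ_of_lt (hB hi)
  have hvmem : n ∈ adom (St k (j+1) (fun t => if t = j then n else m t) A B) := by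
    refine ⟨fM n n, ?_, by simp [fM]⟩
    exact fM_mem_St.2 (Or.inr (Or.inl ⟨j, Nat.lt_succ_self j, by simp, by simp⟩))
  ext v
  simp only [newNulls, Set.mem_setOf_eq, Set.mem_singleton_iff]
  constructor
  · rintro ⟨hv1, hv2, hv3⟩
    obtain ⟨i, hi, hvm⟩ := null_adom_St hBj hv2 hv1
    rcases Nat.lt_succ_iff_lt_or_eq.1 hi with hi' | hi'
    · simp only [Nat.ne_of_lt hi', if_false] at hvm
      exact absurd (hvm ▸ m_mem_adom_St hi') hv3
    · subst hi'; simpa using hvm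
  · rintro rfl
    exact ⟨hn1, hvmem, hn2⟩

lemma newNulls_addA {k j : ℕ} {m : ℕ → Val} {A B : Set ℕ} {i : ℕ}
    (hB : B ⊆ Set.Iio j) :
    newNulls (St k j m A B) (St k j m (insert i A) B) = ∅ := by
  ext v
  simp only [newNulls, Set.mem_setOf_eq, Set.mem_empty_iff_false, iff_false, not_and]
  intro hv1 hv2 hv3
  obtain ⟨i', hi', hvm⟩ := null_adom_St hB hv2 hv1
  exact hv3 (hvm ▸ m_mem_adom_St hi')

lemma newNulls_addB {k j : ℕ} {m : ℕ → Val} {A B : Set ℕ} {i : ℕ}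
    (hB : B ⊆ Set.Iio j) (hij : i < j) :
    newNulls (St k j m A B) (St k j m A (insert i B)) = ∅ := by
  have hBj : insert i B ⊆ Set.Iio j := by
    intro x hx
    rcases Set.mem_insert_iff.1 hx with rfl | hx
    · exact hij
    · exact hB hx
  ext v
  simp only [newNulls, Set.mem_setOf_eq, Set.mem_empty_iff_false, iff_false, not_and]
  intro hv1 hv2 hv3
  obtain ⟨i', hi', hvm⟩ := null_adom_St hBj hv2 hv1
  exact hv3 (hvm ▸ m_mem_adom_St hi')

lemma posOfVal_new {k j : ℕ} {m : ℕ → Val} {A B : Set ℕ} {n : Val}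
    (hB : B ⊆ Set.Iio j) (hn1 : n.isNull) (hn2 : n ∉ adom (St k j m A B)) :
    posOfVal (St k (j+1) (fun t => if t = j then n else m t) A B) n = piN := by
  have hmem : ∀ {v : Val}, v ∈ adom (St k j m A B) → n ≠ v := by
    intro v hv h; exact hn2 (h ▸ hv)
  ext π
  simp only [posOfVal, Set.mem_setOf_eq]
  constructor
  · rintro ⟨F, hF, hrel, hget⟩
    rcases hF with h | ⟨i, hi, h⟩ | ⟨i, hi, h⟩ | ⟨i, hi, h⟩ | ⟨i, hi, h⟩ | ⟨i, hi, h⟩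
    · subst h
      rcases (get2 _ _ _ _).1 hget with ⟨-, hc⟩ | ⟨-, hc⟩ <;>
        exact absurd hc (c_ne_isNull hn1 0)
    · subst h
      rcases (get2 _ _ _ _).1 hget with ⟨-, hc⟩ | ⟨-, hc⟩ <;>
        exact absurd hc (c_ne_isNull hn1 _)
    · subst h
      rcases (get2 _ _ _ _).1 hget with ⟨-, hc⟩ | ⟨h2, hc⟩
      · exact absurd hc (c_ne_isNull hn1 _)
      · -- fQ (c (i+1)) (m' i) with m' i = n at index 1
        have hπ : π = (Qr, 1) := by
          rcases π with ⟨π1, π2⟩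
          simp only [fQ] at hrel
          have h2' : π2 = 1 := h2
          subst h2'
          rw [← hrel]
        rw [hπ]; simp [piN]
    · subst h
      rcases Nat.lt_succ_iff_lt_or_eq.1 hi with hi' | hi'
      · simp only [Nat.ne_of_lt hi', if_false] at hget
        rcases (get2 _ _ _ _).1 hget with ⟨-, hc⟩ | ⟨-, hc⟩ <;>
          exact absurd hc (hmem (m_mem_adom_St hi')).symm
      · subst hi'
        rcases (get2 _ _ _ _).1 hget with ⟨h2, -⟩ | ⟨h2, -⟩
        · have hπ : π = (Mrel, 0) := by
            rcases π with ⟨π1, π2⟩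
            simp only [fM] at hrel
            have h2' : π2 = 0 := h2
            subst h2'
            rw [← hrel]
          rw [hπ]; simp [piN]
        · have hπ : π = (Mrel, 1) := by
            rcases π with ⟨π1, π2⟩
            simp only [fM] at hrel
            have h2' : π2 = 1 := h2
            subst h2'
            rw [← hrel]
          rw [hπ]; simp [piN]
    · subst h
      rcases (get2 _ _ _ _).1 hget with ⟨-, hc⟩ | ⟨-, hc⟩
      · exact absurd hc (by simpa [g] using (isNull_ne_const hn1 0).symm)
      · exact absurd hc (c_ne_isNull hn1 _)
    · subst h
      rcases (get2 _ _ _ _).1 hget with ⟨-, hc⟩ | ⟨-, hc⟩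
      · exact absurd hc (by simpa [g] using (isNull_ne_const hn1 0).symm)
      · have hij : i < j := hB hi
        simp only [Nat.ne_of_lt hij, if_false] at hc
        exact absurd hc (hmem (m_mem_adom_St hij)).symm
  · intro hπ
    rcases hπ with h | h | h <;> subst h
    · refine ⟨fQ (c (j+1)) n, ?_, rfl, ?_⟩
      · refine Or.inr (Or.inr (Or.inl ⟨j, Nat.lt_succ_self j, ?_⟩))
        simp
      · simp [fQ, get2]
    · refine ⟨fM n n, ?_, rfl, ?_⟩
      · refine Or.inr (Or.inr (Or.inr (Or.inl ⟨j, Nat.lt_succ_self j, ?_⟩)))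
        simp
      · simp [fM, get2]
    · refine ⟨fM n n, ?_, rfl, ?_⟩
      · refine Or.inr (Or.inr (Or.inr (Or.inl ⟨j, Nat.lt_succ_self j, ?_⟩)))
        simp
      · simp [fM, get2]

end PayGo

namespace PayGo

lemma bodyAtoms_T1 : T1.bodyAtoms = t1.body := rfl
lemma bodyAtoms_T3 : T3.bodyAtoms = t3.body := rfl

lemma instBodyPos_t1 {m : ℕ → Val} {j a : ℕ} {ν : ℕ → Val}
    (hnulls : ∀ t < j, (m t).isNull)
    (hdist : ∀ t t', t < j → t' < j → m t = m t' → t = t')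
    (haj : a < j)
    (h0 : ν 0 = c j) (h1 : ν 1 = chi m j) (h2 : ν 2 = c (j+1)) :
    instBodyPos T1 ν (m a) = if a + 1 = j then QN else (∅ : Set Pos) := by
  have hanull := hnulls a haj
  ext π
  simp only [instBodyPos, bodyAtoms_T1, Set.mem_setOf_eq]
  constructor
  · rintro ⟨At, hAt, hrel, hget⟩
    have hAt' : At = Atom.mk Qr [.var 0, .var 1] ∨ At = Atom.mk Mrel [.var 0, .var 2] := by
      simpa [t1] using hAt
    rcases hAt' with h | h <;> subst h <;>
      simp only [List.map, Term.eval] at hget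
    · rcases (get2 _ _ _ _).1 hget with ⟨hi2, hv⟩ | ⟨hi2, hv⟩
      · rw [h0] at hv
        exact absurd hv (c_ne_isNull hanull _)
      · rw [h1] at hv
        cases j with
        | zero => omega
        | succ j' =>
          have : j' = a := hdist j' a (Nat.lt_succ_self j') haj hv
          subst this
          simp only [if_pos rfl]
          have hπ : π = (Qr, 1) := by
            rcases π with ⟨π1, π2⟩
            have h2' : π2 = 1 := hi2
            subst h2'
            have hQ : Qr = π1 := hrel
            rw [← hQ]
          rw [hπ]; simp [QN]
    · rcases (get2 _ _ _ _).1 hget with ⟨hi2, hv⟩ | ⟨hi2, hv⟩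
      · rw [h0] at hv
        exact absurd hv (c_ne_isNull hanull _)
      · rw [h2] at hv
        exact absurd hv (c_ne_isNull hanull _)
  · intro hπ
    by_cases hcase : a + 1 = j
    · rw [if_pos hcase] at hπ
      have hπ' : π = (Qr, 1) := by simpa [QN] using hπ
      subst hπ'
      refine ⟨Atom.mk Qr [.var 0, .var 1], by simp [t1], rfl, ?_⟩
      simp only [List.map, Term.eval]
      refine (get2 _ _ _ _).2 (Or.inr ⟨rfl, ?_⟩)
      rw [h1, ← hcase]
      rfl
    · rw [if_neg hcase] at hπ
      exact absurd hπ (Set.notMem_empty π)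

lemma mgV_zero (D : ChaseData) : D.mgV 0 = ∅ := rfl
lemma mgE_zero (D : ChaseData) : D.mgE 0 = ∅ := rfl
lemma mgV_succ (D : ChaseData) (i : ℕ) : D.mgV (i+1) = D.mgV i ∪ D.mgNew i := rfl
lemma mgE_succ (D : ChaseData) (i : ℕ) : D.mgE (i+1) = D.mgE i ∪
    {e | e.src ∈ D.mgV i ∧ e.tgt ∈ D.mgNew i ∧ e.cns = D.cns i ∧
         e.lbl = instBodyPos (D.cns i) (D.asg i) e.src.1} := rfl

lemma mgNew_eq (D : ChaseData) (i : ℕ) :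
    D.mgNew i = {p | ∃ n ∈ newNulls (D.inst i) (D.inst (i+1)),
      p = (n, posOfVal (D.inst (i+1)) n)} := rfl

lemma VSet_succ {j : ℕ} {m : ℕ → Val} {n : Val} :
    VSet (j+1) (fun t => if t = j then n else m t) = VSet j m ∪ {(n, piN)} := by
  ext p
  simp only [VSet, Set.mem_setOf_eq, Set.mem_union, Set.mem_singleton_iff]
  constructor
  · rintro ⟨t, ht, rfl⟩
    rcases Nat.lt_succ_iff_lt_or_eq.1 ht with ht' | ht'
    · exact Or.inl ⟨t, ht', by simp [Nat.ne_of_lt ht']⟩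
    · subst ht'; exact Or.inr (by simp)
  · rintro (⟨t, ht, rfl⟩ | rfl)
    · exact ⟨t, Nat.lt_succ_of_lt ht, by simp [Nat.ne_of_lt ht]⟩
    · exact ⟨j, Nat.lt_succ_self j, by simp⟩

lemma ESet_succ {j : ℕ} {m : ℕ → Val} {n : Val} :
    ESet (j+1) (fun t => if t = j then n else m t) = ESet j m ∪
      {e | ∃ a, a < j ∧ e = medge (m a) n (if a + 1 = j then QN else ∅)} := by
  ext e
  simp only [ESet, Set.mem_setOf_eq, Set.mem_union]
  constructor
  · rintro ⟨a, b, hab, hbj, rfl⟩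
    rcases Nat.lt_succ_iff_lt_or_eq.1 hbj with hb' | hb'
    · exact Or.inl ⟨a, b, hab, hb', by simp [Nat.ne_of_lt (lt_trans hab hb'), Nat.ne_of_lt hb']⟩
    · subst hb'
      exact Or.inr ⟨a, hab, by simp [Nat.ne_of_lt hab]⟩
  · rintro (⟨a, b, hab, hbj, rfl⟩ | ⟨a, haj, rfl⟩)
    · exact ⟨a, b, hab, Nat.lt_succ_of_lt hbj,
        by simp [Nat.ne_of_lt (lt_trans hab hbj), Nat.ne_of_lt hbj]⟩
    · exact ⟨a, j, haj, Nat.lt_succ_self j, by simp [Nat.ne_of_lt haj]⟩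

lemma invariant {k : ℕ} (D : ChaseData) (hD0 : D.inst 0 = Ik k) {r : ℕ}
    (hok : D.okUpTo Sk r) :
    ∀ i, i ≤ r → ∃ (j : ℕ) (m : ℕ → Val) (A B : Set ℕ),
      j ≤ k ∧ B ⊆ Set.Iio j ∧
      (∀ t < j, (m t).isNull) ∧
      (∀ t t', t < j → t' < j → m t = m t' → t = t') ∧
      D.inst i = St k j m A B ∧ D.mgV i = VSet j m ∧ D.mgE i = ESet j m := by
  intro i
  induction i with
  | zero =>
    intro _
    refine ⟨0, fun _ => g, ∅, ∅, Nat.zero_le k, by simp, by omega, by omega, ?_, ?_, ?_⟩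
    · rw [hD0]; exact (St_zero k _).symm
    · ext p; simp [mgV_zero, VSet]
    · ext e; simp [mgE_zero, ESet]
  | succ i ih =>
    intro hir
    obtain ⟨j, m, A, B, hjk, hB, hnulls, hdist, hinst, hV, hE⟩ := ih (by omega)
    obtain ⟨hcns, hstep⟩ := hok i (by omega)
    rw [hinst] at hstep
    rcases step_classify hjk hB hnulls hcns hstep with
      ⟨hc1, hjk', h0, h1, h2, n, hn1, hn2, hJ⟩ | ⟨hc3, i', hik, hiA, hJ⟩ |
      ⟨hc3, i', hij, hiB, hJ⟩
    · -- t1 step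
      have hmnew : D.mgNew i = {(n, piN)} := by
        rw [mgNew_eq, hinst, hJ, newNulls_T1 hB hn1 hn2]
        ext p
        simp only [Set.mem_setOf_eq, Set.mem_singleton_iff]
        constructor
        · rintro ⟨n', hn', rfl⟩
          have hn'' : n' = n := hn'
          subst hn''
          rw [posOfVal_new hB hn1 hn2]
        · rintro rfl
          exact ⟨n, rfl, by rw [posOfVal_new hB hn1 hn2]⟩
      refine ⟨j+1, fun t => if t = j then n else m t, A, B, hjk',
        fun x hx => Nat.lt_succ_of_lt (hB hx), ?_, ?_, hJ, ?_, ?_⟩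
      · intro t ht
        by_cases h : t = j
        · simpa [h] using hn1
        · have ht' : t < j := by omega
          simpa [h] using hnulls t ht'
      · intro t t' ht ht' heq
        have heq' : (if t = j then n else m t) = (if t' = j then n else m t') := heq
        by_cases h : t = j <;> by_cases h' : t' = j
        · omega
        · exfalso
          have ht'' : t' < j := by omega
          rw [if_pos h, if_neg h'] at heq'
          exact hn2 (heq' ▸ m_mem_adom_St ht'')
        · exfalso
          have ht'' : t < j := by omega
          rw [if_neg h, if_pos h'] at heq'
          exact hn2 (heq'.symm ▸ m_mem_adom_St ht'')
        · have ht1 : t < j := by omega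
          have ht2 : t' < j := by omega
          rw [if_neg h, if_neg h'] at heq'
          exact hdist t t' ht1 ht2 heq'
      · rw [mgV_succ, hV, hmnew, VSet_succ]
      · rw [mgE_succ, hE, hV, hmnew, hc1, ESet_succ]
        congr 1
        ext e
        simp only [Set.mem_setOf_eq, Set.mem_singleton_iff, VSet]
        constructor
        · rintro ⟨⟨a, ha, hsrc⟩, htgt, hcns', hlbl⟩
          refine ⟨a, ha, ?_⟩
          have hsrc1 : e.src.1 = m a := by rw [hsrc]
          rw [hsrc1, instBodyPos_t1 hnulls hdist ha h0 h1 h2] at hlbl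
          rcases e with ⟨s, cn, lb, tg⟩
          simp only at hsrc htgt hcns' hlbl
          rw [medge, hsrc, htgt, hcns', hlbl]
        · rintro ⟨a, ha, rfl⟩
          refine ⟨⟨a, ha, rfl⟩, rfl, rfl, ?_⟩
          show (if a + 1 = j then QN else ∅) = instBodyPos T1 (D.asg i) (m a)
          rw [instBodyPos_t1 hnulls hdist ha h0 h1 h2]
    · -- t3 step on constants
      have hmnew : D.mgNew i = ∅ := by
        rw [mgNew_eq, hinst, hJ, newNulls_addA hB]
        ext p; simp
      refine ⟨j, m, A.insert i', B, hjk, hB, hnulls, hdist, hJ, ?_, ?_⟩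
      · rw [mgV_succ, hV, hmnew, Set.union_empty]
      · rw [mgE_succ, hE, hmnew]
        have : {e : MEdge | e.src ∈ VSet j m ∧ e.tgt ∈ (∅ : Set MNode) ∧
            e.cns = D.cns i ∧ e.lbl = instBodyPos (D.cns i) (D.asg i) e.src.1} = ∅ := by
          ext e; simp
        rw [hV, this, Set.union_empty]
    · -- t3 step on nulls
      have hmnew : D.mgNew i = ∅ := by
        rw [mgNew_eq, hinst, hJ, newNulls_addB hB hij]
        ext p; simp
      refine ⟨j, m, A, B.insert i', hjk, ?_, hnulls, hdist, hJ, ?_, ?_⟩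
      · intro x hx
        rcases Set.mem_insert_iff.1 hx with rfl | hx
        · exact hij
        · exact hB hx
      · rw [mgV_succ, hV, hmnew, Set.union_empty]
      · rw [mgE_succ, hE, hmnew]
        have : {e : MEdge | e.src ∈ VSet j m ∧ e.tgt ∈ (∅ : Set MNode) ∧
            e.cns = D.cns i ∧ e.lbl = instBodyPos (D.cns i) (D.asg i) e.src.1} = ∅ := by
          ext e; simp
        rw [hV, this, Set.union_empty]

end PayGo

namespace PayGo

lemma final_j {k j : ℕ} {m : ℕ → Val} {A B : Set ℕ} (hjk : j ≤ k)
    (hholds : T1.holds (St k j m A B)) : j = k := by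
  by_contra h
  have hjk' : j < k := lt_of_le_of_ne hjk h
  set ν : ℕ → Val := fun v => if v = 0 then c j else if v = 1 then chi m j
    else if v = 2 then c (j+1) else g with hν
  have hsat := hholds ν
  rw [t1_satAt_iff] at hsat
  obtain ⟨w, hw, -⟩ := hsat (by
    show fQ (ν 0) (ν 1) ∈ _ ∧ fM (ν 0) (ν 2) ∈ _
    simp only [hν]
    norm_num
    exact body_t1_mem hjk')
  have hν2 : ν 2 = c (j+1) := by simp [hν]
  rw [hν2] at hw
  exact no_head_t1 hjk hw

lemma chain'_map_range {α : Type*} (f : ℕ → α) (R : α → α → Prop) (n : ℕ)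
    (h : ∀ i, i + 1 < n → R (f i) (f (i+1))) :
    List.Chain' R ((List.range n).map f) := by
  rw [List.Chain', List.isChain_map]
  cases n with
  | zero => simp
  | succ n' =>
    rw [List.isChain_range_succ]
    exact fun i hi => h i (by omega)

lemma kCyclic_ESet {k : ℕ} {m : ℕ → Val}
    (hdist : ∀ t t', t < k → t' < k → m t = m t' → t = t') :
    kCyclic (ESet k m) (k-1) := by
  refine ⟨(List.range (k-1)).map (fun a => medge (m a) (m (a+1)) QN),
    (List.range (k-1)).map (fun a => medge (m a) (m (a+1)) QN),
    ⟨?_, ?_⟩, List.Sublist.refl _, by simp, ?_, ?_⟩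
  · intro e he
    obtain ⟨a, ha, rfl⟩ := List.mem_map.1 he
    rw [List.mem_range] at ha
    exact ⟨a, a+1, Nat.lt_succ_self a, by omega, by rw [if_pos rfl]⟩
  · exact chain'_map_range _ _ _ (fun i _ => rfl)
  · refine (List.nodup_range (n := k-1)).map_on ?_
    intro a ha b hb heq
    rw [List.mem_range] at ha hb
    have : m (a+1) = m (b+1) := congrArg (fun e => e.tgt.1) heq
    exact Nat.succ_injective (hdist _ _ (by omega) (by omega) this)
  · exact chain'_map_range _ _ _ (fun i _ => rfl)

lemma path_bound {k : ℕ} {m : ℕ → Val}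
    (hdist : ∀ t t', t < k → t' < k → m t = m t' → t = t') :
    ∀ (l : List MEdge) (e : MEdge) (a b : ℕ) (L : Set Pos),
      (∀ x ∈ e :: l, x ∈ ESet k m) →
      List.Chain' (fun x y => x.tgt = y.src) (e :: l) →
      a < b → b < k → e = medge (m a) (m b) L → l.length + 1 + b ≤ k := by
  intro l
  induction l with
  | nil => intro e a b L _ _ hab hbk _; simp only [List.length_nil]; omega
  | cons e' l' ih =>
    intro e a b L hmem hchain hab hbk he
    obtain ⟨a', b', ha'b', hb'k, he'⟩ := hmem e' (by simp)
    have hR : e.tgt = e'.src := (List.isChain_cons_cons.1 hchain).1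
    have hchain' : List.Chain' (fun x y => x.tgt = y.src) (e' :: l') :=
      (List.isChain_cons_cons.1 hchain).2
    have hba' : b = a' := by
      rw [he, he'] at hR
      have : m b = m a' := congrArg Prod.fst hR
      exact hdist b a' hbk (lt_trans ha'b' hb'k) this
    have := ih e' a' b' (if a' + 1 = b' then QN else ∅)
      (fun x hx => hmem x (List.mem_cons_of_mem _ hx)) hchain' ha'b' hb'k he'
    have hbb' : b + 1 ≤ b' := by omega
    simp only [List.length_cons]
    omega

lemma not_kCyclic_ESet {k : ℕ} {m : ℕ → Val} (hk : 1 ≤ k)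
    (hdist : ∀ t t', t < k → t' < k → m t = m t' → t = t') :
    ¬ kCyclic (ESet k m) k := by
  rintro ⟨l, es, ⟨hmem, hchain⟩, hsub, hlen, -, -⟩
  have hle : es.length ≤ l.length := hsub.length_le
  cases l with
  | nil => rw [List.length_nil] at hle; omega
  | cons e l' =>
    obtain ⟨a, b, hab, hbk, he⟩ := hmem e (by simp)
    have := path_bound hdist l' e a b _ hmem hchain hab hbk he
    simp only [List.length_cons] at hle
    omega

lemma forall_chase {k : ℕ} (hk : 1 ≤ k) (D : ChaseData) (r : ℕ)
    (hD0 : D.inst 0 = Ik k) (hok : D.okUpTo Sk r)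
    (hsat : ∀ α ∈ Sk, α.holds (D.inst r)) :
    kCyclic (D.mgE r) (k-1) ∧ ¬ kCyclic (D.mgE r) k := by
  obtain ⟨j, m, A, B, hjk, hB, hnulls, hdist, hinst, hV, hE⟩ :=
    invariant D hD0 hok r le_rfl
  have hT1 : T1.holds (D.inst r) := hsat T1 (by simp [Sk])
  rw [hinst] at hT1
  have hjeq : j = k := final_j hjk hT1
  subst hjeq
  rw [hE]
  exact ⟨kCyclic_ESet hdist, not_kCyclic_ESet hk hdist⟩

end PayGo

namespace PayGo

def mm : ℕ → Val := Val.null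

lemma mm_null (t : ℕ) : (mm t).isNull := trivial

lemma mm_dist {t t' : ℕ} (h : mm t = mm t') : t = t' := by
  simpa [mm] using h

lemma Iio_zero : (Set.Iio 0 : Set ℕ) = ∅ := by
  ext x; simp

lemma insert_Iio (n : ℕ) : insert n (Set.Iio n) = Set.Iio (n+1) := by
  ext x; simp

lemma St_congr {k j : ℕ} {m m' : ℕ → Val} {A B : Set ℕ}
    (hB : B ⊆ Set.Iio j) (h : ∀ t < j, m t = m' t) :
    St k j m A B = St k j m' A B := by
  ext F
  simp only [St, Set.mem_setOf_eq]
  constructor <;>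
    rintro (h1 | h1 | ⟨i, hi, h1⟩ | ⟨i, hi, h1⟩ | h1 | ⟨i, hi, h1⟩)
  · exact Or.inl h1
  · exact Or.inr (Or.inl h1)
  · exact Or.inr (Or.inr (Or.inl ⟨i, hi, by rw [h1, h i hi]⟩))
  · exact Or.inr (Or.inr (Or.inr (Or.inl ⟨i, hi, by rw [h1, h i hi]⟩)))
  · exact Or.inr (Or.inr (Or.inr (Or.inr (Or.inl h1))))
  · exact Or.inr (Or.inr (Or.inr (Or.inr (Or.inr ⟨i, hi, by rw [h1, h i (hB hi)]⟩))))
  · exact Or.inl h1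
  · exact Or.inr (Or.inl h1)
  · exact Or.inr (Or.inr (Or.inl ⟨i, hi, by rw [h1, h i hi]⟩))
  · exact Or.inr (Or.inr (Or.inr (Or.inl ⟨i, hi, by rw [h1, h i hi]⟩)))
  · exact Or.inr (Or.inr (Or.inr (Or.inr (Or.inl h1))))
  · exact Or.inr (Or.inr (Or.inr (Or.inr (Or.inr ⟨i, hi, by rw [h1, h i (hB hi)]⟩))))

lemma mm_fresh {k j : ℕ} {A B : Set ℕ} (hB : B ⊆ Set.Iio j) :
    mm j ∉ adom (St k j mm A B) := by
  intro hmem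
  obtain ⟨t, ht, heq⟩ := null_adom_St hB hmem (mm_null j)
  exact absurd (mm_dist heq) (by omega)

def cInst (k i : ℕ) : Set Fact :=
  if i ≤ k then St k i mm ∅ ∅
  else if i ≤ 2*k then St k k mm (Set.Iio (i-k)) ∅
  else St k k mm (Set.Iio k) (Set.Iio (min (i - 2*k) k))

def cCns (k i : ℕ) : Constraint := if i < k then T1 else T3

def cAsg (k i : ℕ) : ℕ → Val :=
  if i < k then
    (fun v => if v = 0 then c i else if v = 1 then chi mm i
      else if v = 2 then c (i+1) else mm i)
  else if i < 2*k then
    (fun v => if v = 0 then c (i-k) else c (i-k+1))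
  else
    (fun _ => mm (i-2*k))

def cD (k : ℕ) : ChaseData := ⟨cInst k, cCns k, cAsg k⟩

lemma cInst_lt {k i : ℕ} (h : i ≤ k) : cInst k i = St k i mm ∅ ∅ := if_pos h

lemma cInst_mid {k i : ℕ} (h1 : k ≤ i) (h2 : i ≤ 2*k) :
    cInst k i = St k k mm (Set.Iio (i-k)) ∅ := by
  rcases Nat.eq_or_lt_of_le h1 with h | h
  · rw [← h, cInst_lt le_rfl]
    have e : k - k = 0 := by omega
    rw [e, Iio_zero]
  · unfold cInst
    rw [if_neg (by omega), if_pos h2]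

lemma cInst_hi {k i : ℕ} (hk : 1 ≤ k) (h1 : 2*k ≤ i) (h2 : i ≤ 3*k) :
    cInst k i = St k k mm (Set.Iio k) (Set.Iio (i-2*k)) := by
  rcases Nat.eq_or_lt_of_le h1 with h | h
  · rw [← h]
    have e2 : 2*k - 2*k = 0 := by omega
    rw [e2, Iio_zero]
    unfold cInst
    rw [if_neg (by omega), if_pos le_rfl]
    have e1 : 2*k - k = k := by omega
    rw [e1]
  · unfold cInst
    rw [if_neg (by omega), if_neg (by omega)]
    have e : min (i - 2*k) k = i - 2*k := by omega
    rw [e]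

lemma cD_ok (k : ℕ) (hk : 1 ≤ k) : (cD k).okUpTo Sk (3*k) := by
  intro i hi
  by_cases hik : i < k
  · refine ⟨by simp [cD, cCns, hik, Sk], ?_⟩
    show (cCns k i).chaseStep (cAsg k i) (cInst k i) (cInst k (i+1))
    rw [cInst_lt (by omega), cInst_lt (by omega)]
    simp only [cCns, if_pos hik]
    have e0 : cAsg k i 0 = c i := by simp [cAsg, hik]
    have e1 : cAsg k i 1 = chi mm i := by simp [cAsg, hik]
    have e2 : cAsg k i 2 = c (i+1) := by simp [cAsg, hik]
    rw [t1_chaseStep_iff, e2]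
    constructor
    · exact t1_violate_intro hik e0 e1 e2
    · refine ⟨mm i, mm_null i, mm_fresh (by simp), ?_⟩
      rw [St_succ (by simp)]
      refine St_congr (by simp) ?_
      intro t ht
      by_cases h : t = i <;> simp [h, mm]
  · by_cases hik2 : i < 2*k
    · refine ⟨by simp [cD, cCns, hik, Sk], ?_⟩
      show (cCns k i).chaseStep (cAsg k i) (cInst k i) (cInst k (i+1))
      rw [cInst_mid (by omega) (by omega), cInst_mid (by omega) (by omega)]
      simp only [cCns, if_neg hik]
      have e0 : cAsg k i 0 = c (i-k) := by simp [cAsg, hik, hik2]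
      have e1 : cAsg k i 1 = c (i-k+1) := by simp [cAsg, hik, hik2]
      rw [t3_chaseStep_iff, e1]
      constructor
      · exact t3_violate_introA (i := i - k) (by simp) (fun t _ => mm_null t)
          (by omega) (by simp) e0 e1
      · rw [St_addA]
        have e2 : insert (i-k) (Set.Iio (i-k)) = Set.Iio (i+1-k) := by
          rw [insert_Iio]
          have e : i - k + 1 = i + 1 - k := by omega
          rw [e]
        rw [e2]
    · refine ⟨by simp [cD, cCns, hik, Sk], ?_⟩
      show (cCns k i).chaseStep (cAsg k i) (cInst k i) (cInst k (i+1))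
      rw [cInst_hi hk (by omega) (by omega), cInst_hi hk (by omega) (by omega)]
      simp only [cCns, if_neg hik]
      have e0 : cAsg k i 0 = mm (i-2*k) := by simp [cAsg, hik, hik2]
      have e1 : cAsg k i 1 = mm (i-2*k) := by simp [cAsg, hik, hik2]
      rw [t3_chaseStep_iff, e1]
      constructor
      · exact t3_violate_introB (i := i - 2*k)
          (fun x hx => by simp only [Set.mem_Iio] at hx ⊢; omega) (fun t _ => mm_null t)
          (fun t t' _ _ h => mm_dist h) (by omega) (by simp) e0 e1
      · rw [St_addB]
        have e2 : insert (i-2*k) (Set.Iio (i-2*k)) = Set.Iio (i+1-2*k) := by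
          rw [insert_Iio]
          have e : i - 2*k + 1 = i + 1 - 2*k := by omega
          rw [e]
        rw [e2]

lemma final_holds (k : ℕ) :
    ∀ α ∈ Sk, α.holds (St k k mm (Set.Iio k) (Set.Iio k)) := by
  intro α hα
  rcases mem_Sk.1 hα with rfl | rfl
  · intro ν
    by_contra hns
    obtain ⟨hlt, -⟩ := t1_violate_elim (le_refl (Set.Iio k)) le_rfl
      (fun t _ => mm_null t) hns
    omega
  · intro ν
    by_contra hns
    rcases t3_violate_elim hns with ⟨i, hik, hiA, -⟩ | ⟨i, hij, hiB, -⟩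
    · exact hiA hik
    · exact hiB hij

lemma cD_exists (k : ℕ) (hk : 1 ≤ k) :
    ∃ (D : ChaseData) (r : ℕ), D.inst 0 = Ik k ∧ D.okUpTo Sk r ∧
      ∀ α ∈ Sk, α.holds (D.inst r) := by
  refine ⟨cD k, 3*k, ?_, cD_ok k hk, ?_⟩
  · show cInst k 0 = Ik k
    rw [cInst_lt (by omega), St_zero]
  · show ∀ α ∈ Sk, α.holds (cInst k (3*k))
    have : cInst k (3*k) = St k k mm (Set.Iio k) (Set.Iio k) := by
      rw [cInst_hi hk (by omega) le_rfl]
      have e : 3*k - 2*k = k := by omega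
      rw [e]
    rw [this]
    exact final_holds k

end PayGo

namespace PayGo

lemma Sk_finite : Sk.Finite := (Set.finite_singleton T3).insert T1

lemma Ik_finite (k : ℕ) : (Ik k).Finite := by
  have : Ik k = insert (fQ (c 0) (c 0)) ((fun i => fM (c i) (c (i+1))) '' (Set.Iio k)) := by
    ext F
    constructor
    · intro hF
      rcases hF with h | ⟨i, hi, h⟩ | ⟨i, hi, h⟩ | ⟨i, hi, h⟩ | ⟨i, hi, h⟩ | ⟨i, hi, h⟩
      · exact Set.mem_insert_iff.2 (Or.inl h)
      · exact Set.mem_insert_iff.2 (Or.inr ⟨i, hi, h.symm⟩)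
      · exact absurd hi (by omega)
      · exact absurd hi (by omega)
      · exact absurd hi (Set.notMem_empty i)
      · exact absurd hi (Set.notMem_empty i)
    · intro hF
      rcases Set.mem_insert_iff.1 hF with h | ⟨i, hi, h⟩
      · exact Or.inl h
      · exact Or.inr (Or.inl ⟨i, hi, h.symm⟩)
  rw [this]
  exact (((Set.finite_Iio k).image _).insert _)

lemma T1_mem_Sk : T1 ∈ Sk := by simp [Sk]
lemma T3_mem_Sk : T3 ∈ Sk := by simp [Sk]

lemma notIrr_T1 (k : ℕ) (hk : 1 ≤ k) : ¬ Irrelevant (Ik k) Sk T1 := by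
  intro hirr
  refine hirr ⟨cD k, 1, ?_, ?_, 0, Nat.zero_lt_one, ?_⟩
  · show cInst k 0 = Ik k
    rw [cInst_lt (by omega), St_zero]
  · exact fun i hi => cD_ok k hk i (by omega)
  · show cCns k 0 = T1
    unfold cCns
    rw [if_pos (by omega : 0 < k)]

def dT3 (k : ℕ) : ChaseData :=
  ⟨(fun i => if i = 0 then Ik k else St k 0 (fun _ => g) {0} ∅),
   (fun _ => T3), (fun _ v => if v = 0 then c 0 else c 1)⟩

lemma dT3_ok (k : ℕ) (hk : 1 ≤ k) : (dT3 k).okUpTo Sk 1 := by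
  intro i hi
  have hi0 : i = 0 := by omega
  subst hi0
  refine ⟨T3_mem_Sk, ?_⟩
  show T3.chaseStep ((dT3 k).asg 0) ((dT3 k).inst 0) ((dT3 k).inst 1)
  have h0 : (dT3 k).inst 0 = St k 0 (fun _ => g) ∅ ∅ := by
    show Ik k = _
    rw [St_zero]
  have h1 : (dT3 k).inst 1 = St k 0 (fun _ => g) {0} ∅ := by
    show (if 1 = 0 then Ik k else St k 0 (fun _ => g) {0} ∅) = _
    simp
  rw [h0, h1, t3_chaseStep_iff]
  have e0 : (dT3 k).asg 0 0 = c 0 := by simp [dT3]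
  have e1 : (dT3 k).asg 0 1 = c (0+1) := by simp [dT3]
  constructor
  · exact t3_violate_introA (by simp) (fun t ht => absurd ht (by omega)) hk
      (Set.notMem_empty 0) e0 e1
  · rw [e1, St_addA]
    congr 1
    simp

lemma notIrr_T3 (k : ℕ) (hk : 1 ≤ k) : ¬ Irrelevant (Ik k) Sk T3 := by
  intro hirr
  exact hirr ⟨dT3 k, 1, rfl, dT3_ok k hk, 0, Nat.zero_lt_one, rfl⟩

lemma notIrr_set (k : ℕ) (hk : 1 ≤ k) :
    {α | α ∈ Sk ∧ ¬ Irrelevant (Ik k) Sk α} = Sk := by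
  ext α
  simp only [Set.mem_setOf_eq]
  constructor
  · exact fun h => h.1
  · intro hα
    refine ⟨hα, ?_⟩
    rcases mem_Sk.1 hα with rfl | rfl
    · exact notIrr_T1 k hk
    · exact notIrr_T3 k hk

lemma occursAt_head1_3 : occursAt t1.head 3 (Mrel, 1) :=
  ⟨Atom.mk Mrel [.var 3, .var 3], by simp [t1], rfl, rfl⟩

lemma affected_M1 : Affected Sk (Mrel, 1) :=
  Affected.ex t1 3 (Mrel, 1) T1_mem_Sk ((mem_exVars_t1 3).2 rfl) occursAt_head1_3

lemma occursAt_body1_2 {π : Pos} (h : occursAt t1.body 2 π) : π = (Mrel, 1) := by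
  obtain ⟨At, hAt, hrel, hget⟩ := h
  have hAt' : At = Atom.mk Qr [.var 0, .var 1] ∨ At = Atom.mk Mrel [.var 0, .var 2] := by
    simpa [t1] using hAt
  rcases hAt' with h | h <;> subst h
  · rcases (get2 _ _ _ _).1 hget with ⟨-, hv⟩ | ⟨-, hv⟩ <;> simp at hv
  · rcases (get2 _ _ _ _).1 hget with ⟨-, hv⟩ | ⟨h2, -⟩
    · simp at hv
    · rcases π with ⟨π1, π2⟩
      have hr : Mrel = π1 := hrel
      have h2' : π2 = 1 := h2
      rw [← hr, h2']

lemma special_edge_Sk : propSpecialEdge Sk (Mrel, 1) (Mrel, 1) := by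
  refine ⟨t1, T1_mem_Sk, 2, (mem_varsOf_t1body 2).2 (by omega),
    (mem_varsOf_t1head 2).2 (by omega), ?_, ?_, 3, (mem_exVars_t1 3).2 rfl,
    occursAt_head1_3⟩
  · exact ⟨Atom.mk Mrel [.var 0, .var 2], by simp [t1], rfl, rfl⟩
  · intro π hπ
    rw [occursAt_body1_2 hπ]
    exact affected_M1

lemma not_safe_of_mem {S : Set Constraint} (hT1 : T1 ∈ S) : ¬ IsSafe S := by
  intro hsafe
  have haff : Affected S (Mrel, 1) :=
    Affected.ex t1 3 (Mrel, 1) hT1 ((mem_exVars_t1 3).2 rfl) occursAt_head1_3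
  refine hsafe ⟨(Mrel, 1), (Mrel, 1), ?_, Relation.ReflTransGen.refl⟩
  refine ⟨t1, hT1, 2, (mem_varsOf_t1body 2).2 (by omega),
    (mem_varsOf_t1head 2).2 (by omega), ?_, ?_, 3, (mem_exVars_t1 3).2 rfl,
    occursAt_head1_3⟩
  · exact ⟨Atom.mk Mrel [.var 0, .var 2], by simp [t1], rfl, rfl⟩
  · intro π hπ
    rw [occursAt_body1_2 hπ]
    exact haff

end PayGo

namespace PayGo

@[simp] lemma c_eq_c {i j : ℕ} : c i = c j ↔ i = j := by simp [c]
@[simp] lemma g_eq_c {i : ℕ} : g = c i ↔ False := by simp [g, c]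
@[simp] lemma c_eq_g {i : ℕ} : c i = g ↔ False := by simp [g, c]
@[simp] lemma mm_eq_mm {i j : ℕ} : mm i = mm j ↔ i = j := by simp [mm]
@[simp] lemma g_eq_mm {i : ℕ} : g = mm i ↔ False := by simp [g, mm]
@[simp] lemma mm_eq_g {i : ℕ} : mm i = g ↔ False := by simp [g, mm]
@[simp] lemma c_eq_mm {i j : ℕ} : c i = mm j ↔ False := by simp [c, mm]
@[simp] lemma mm_eq_c {i j : ℕ} : mm i = c j ↔ False := by simp [c, mm]
@[simp] lemma fQ_eq_fM {x y a b : Val} : fQ x y = fM a b ↔ False := by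
  simp [fQ, fM, Qr, Mrel]
@[simp] lemma fM_eq_fQ {x y a b : Val} : fM x y = fQ a b ↔ False := by
  simp [fQ, fM, Qr, Mrel]
@[simp] lemma fQ_eq_fQ {x y a b : Val} : fQ x y = fQ a b ↔ x = a ∧ y = b := fQ_inj
@[simp] lemma fM_eq_fM {x y a b : Val} : fM x y = fM a b ↔ x = a ∧ y = b := fM_inj

lemma T1_ne_T3 : T1 ≠ T3 := by
  simp only [T1, T3, ne_eq, Constraint.tgd.injEq]
  intro h
  have := congrArg TGD.body h
  simp [t1, t3] at this

/-! ### positions -/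

lemma pos_T1_Q0 : ((Qr,0) : Pos) ∈ T1.pos :=
  ⟨Atom.mk Qr [.var 0, .var 1], by simp [T1, Constraint.bodyAtoms, t1], rfl, by simp⟩
lemma pos_T1_Q1 : ((Qr,1) : Pos) ∈ T1.pos :=
  ⟨Atom.mk Qr [.var 0, .var 1], by simp [T1, Constraint.bodyAtoms, t1], rfl, by simp⟩
lemma pos_T1_M0 : ((Mrel,0) : Pos) ∈ T1.pos :=
  ⟨Atom.mk Mrel [.var 0, .var 2], by simp [T1, Constraint.bodyAtoms, t1], rfl, by simp⟩
lemma pos_T1_M1 : ((Mrel,1) : Pos) ∈ T1.pos :=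
  ⟨Atom.mk Mrel [.var 0, .var 2], by simp [T1, Constraint.bodyAtoms, t1], rfl, by simp⟩
lemma pos_T3_M0 : ((Mrel,0) : Pos) ∈ T3.pos :=
  ⟨Atom.mk Mrel [.var 0, .var 1], by simp [T3, Constraint.bodyAtoms, t3], rfl, by simp⟩
lemma pos_T3_M1 : ((Mrel,1) : Pos) ∈ T3.pos :=
  ⟨Atom.mk Mrel [.var 0, .var 1], by simp [T3, Constraint.bodyAtoms, t3], rfl, by simp⟩

lemma pos_T1_sub : T1.pos ⊆ {((Qr,0) : Pos), (Qr,1), (Mrel,0), (Mrel,1)} := by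
  rintro ⟨π1, π2⟩ ⟨A, hA, hrel, hlen⟩
  have hA' : A = Atom.mk Qr [.var 0, .var 1] ∨ A = Atom.mk Mrel [.var 0, .var 2] := by
    simpa [T1, Constraint.bodyAtoms, t1] using hA
  rcases hA' with h | h <;> subst h <;>
    simp only [Atom.mk.injEq] at hrel hlen ⊢
  · have h1 : π1 = Qr := hrel.symm
    have h2 : π2 < 2 := hlen
    subst h1
    interval_cases π2 <;> simp
  · have h1 : π1 = Mrel := hrel.symm
    have h2 : π2 < 2 := hlen
    subst h1
    interval_cases π2 <;> simp

lemma pos_T3_sub : T3.pos ⊆ {((Mrel,0) : Pos), (Mrel,1)} := by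
  rintro ⟨π1, π2⟩ ⟨A, hA, hrel, hlen⟩
  have hA' : A = Atom.mk Mrel [.var 0, .var 1] := by
    simpa [T3, Constraint.bodyAtoms, t3] using hA
  subst hA'
  have h1 : π1 = Mrel := hrel.symm
  have h2 : π2 < 2 := hlen
  subst h1
  interval_cases π2 <;> simp

/-! ### occursAt facts -/

lemma occursAt_head1_3Q1 : occursAt t1.head 3 (Qr, 1) :=
  ⟨Atom.mk Qr [.var 2, .var 3], by simp [t1], rfl, rfl⟩
lemma occursAt_head1_3M0 : occursAt t1.head 3 (Mrel, 0) :=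
  ⟨Atom.mk Mrel [.var 3, .var 3], by simp [t1], rfl, rfl⟩

lemma occursAt_head1_Q0 {x : ℕ} (h : occursAt t1.head x (Qr, 0)) : x = 2 := by
  obtain ⟨A, hA, hrel, hget⟩ := h
  have hA' : A = Atom.mk Qr [.var 2, .var 3] ∨ A = Atom.mk Mrel [.var 3, .var 3] := by
    simpa [t1] using hA
  rcases hA' with h | h <;> subst h
  · rcases (get2 _ _ _ _).1 hget with ⟨-, hv⟩ | ⟨h0, -⟩
    · have := hv
      simp only [Term.var.injEq] at this
      omega
    · exact absurd h0 (by simp)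
  · exact absurd hrel (by simp [Qr, Mrel])

lemma occursAt_head3_M1 {x : ℕ} (h : occursAt t3.head x (Mrel, 1)) : x = 1 := by
  obtain ⟨A, hA, hrel, hget⟩ := h
  have hA' : A = Atom.mk Mrel [.const 0, .var 1] := by simpa [t3] using hA
  subst hA'
  rcases (get2 _ _ _ _).1 hget with ⟨h0, -⟩ | ⟨-, hv⟩
  · exact absurd h0 (by simp)
  · have := hv
    simp only [Term.var.injEq] at this
    omega

lemma occursAt_head3_M0 {x : ℕ} (h : occursAt t3.head x (Mrel, 0)) : False := by
  obtain ⟨A, hA, hrel, hget⟩ := h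
  have hA' : A = Atom.mk Mrel [.const 0, .var 1] := by simpa [t3] using hA
  subst hA'
  rcases (get2 _ _ _ _).1 hget with ⟨-, hv⟩ | ⟨h1, -⟩
  · simp at hv
  · exact absurd h1 (by simp)

lemma occursAt_body3_1 {π : Pos} (h : occursAt t3.body 1 π) : π = (Mrel, 1) := by
  obtain ⟨A, hA, hrel, hget⟩ := h
  have hA' : A = Atom.mk Mrel [.var 0, .var 1] := by simpa [t3] using hA
  subst hA'
  rcases (get2 _ _ _ _).1 hget with ⟨-, hv⟩ | ⟨h2, -⟩
  · simp at hv
  · rcases π with ⟨π1, π2⟩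
    have hr : Mrel = π1 := hrel
    have h2' : π2 = 1 := h2
    rw [← hr, h2']

/-! ### affCl facts -/

lemma affCl_t1_M0 (P : Set Pos) : ((Mrel,0) : Pos) ∈ affCl t1 P :=
  ⟨⟨Atom.mk Mrel [.var 3, .var 3], by simp [t1], rfl, by simp⟩,
    Or.inr ⟨3, (mem_exVars_t1 3).2 rfl, occursAt_head1_3M0⟩⟩

lemma affCl_t1_M1 (P : Set Pos) : ((Mrel,1) : Pos) ∈ affCl t1 P :=
  ⟨⟨Atom.mk Mrel [.var 3, .var 3], by simp [t1], rfl, by simp⟩,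
    Or.inr ⟨3, (mem_exVars_t1 3).2 rfl, occursAt_head1_3⟩⟩

lemma affCl_t1_Q1 (P : Set Pos) : ((Qr,1) : Pos) ∈ affCl t1 P :=
  ⟨⟨Atom.mk Qr [.var 2, .var 3], by simp [t1], rfl, by simp⟩,
    Or.inr ⟨3, (mem_exVars_t1 3).2 rfl, occursAt_head1_3Q1⟩⟩

lemma affCl_t1_Q0 {P : Set Pos} (hM1 : ((Mrel,1) : Pos) ∈ P) :
    ((Qr,0) : Pos) ∈ affCl t1 P := by
  refine ⟨⟨Atom.mk Qr [.var 2, .var 3], by simp [t1], rfl, by simp⟩, Or.inl ?_⟩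
  intro x hx hocc π' hπ'
  have hx2 : x = 2 := occursAt_head1_Q0 hocc
  subst hx2
  rw [occursAt_body1_2 hπ']
  exact hM1

lemma affCl_t3_M0 (P : Set Pos) : ((Mrel,0) : Pos) ∈ affCl t3 P := by
  refine ⟨⟨Atom.mk Mrel [.const 0, .var 1], by simp [t3], rfl, by simp⟩, Or.inl ?_⟩
  intro x hx hocc
  exact absurd hocc occursAt_head3_M0

lemma affCl_t3_M1 {P : Set Pos} (hM1 : ((Mrel,1) : Pos) ∈ P) :
    ((Mrel,1) : Pos) ∈ affCl t3 P := by
  refine ⟨⟨Atom.mk Mrel [.const 0, .var 1], by simp [t3], rfl, by simp⟩, Or.inl ?_⟩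
  intro x hx hocc π' hπ'
  have hx1 : x = 1 := occursAt_head3_M1 hocc
  subst hx1
  rw [occursAt_body3_1 hπ']
  exact hM1

/-! ### headUniVars -/

lemma hu_T1 : (2:ℕ) ∈ T1.headUniVars :=
  ⟨(mem_varsOf_t1head 2).2 (Or.inl rfl), (mem_varsOf_t1body 2).2 (by tauto)⟩

lemma hu_T3 : (1:ℕ) ∈ T3.headUniVars :=
  ⟨(mem_varsOf_t3head 1).2 rfl, (mem_varsOf_t3body 1).2 (Or.inr rfl)⟩

end PayGo

namespace PayGo

lemma nullAt_fM {x y : Val} {π : Pos} (h : (fM x y).nullAt π) :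
    (π = (Mrel,0) ∧ x.isNull) ∨ (π = (Mrel,1) ∧ y.isNull) := by
  obtain ⟨hrel, v, hget, hnull⟩ := h
  rcases π with ⟨π1, π2⟩
  have hr : Mrel = π1 := hrel
  rcases (get2 _ _ _ _).1 hget with ⟨h2, hv⟩ | ⟨h2, hv⟩
  · have h2' : π2 = 0 := h2
    exact Or.inl ⟨by rw [← hr, h2'], hv ▸ hnull⟩
  · have h2' : π2 = 1 := h2
    exact Or.inr ⟨by rw [← hr, h2'], hv ▸ hnull⟩

lemma nullAt_fQ {x y : Val} {π : Pos} (h : (fQ x y).nullAt π) :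
    (π = (Qr,0) ∧ x.isNull) ∨ (π = (Qr,1) ∧ y.isNull) := by
  obtain ⟨hrel, v, hget, hnull⟩ := h
  rcases π with ⟨π1, π2⟩
  have hr : Qr = π1 := hrel
  rcases (get2 _ _ _ _).1 hget with ⟨h2, hv⟩ | ⟨h2, hv⟩
  · have h2' : π2 = 0 := h2
    exact Or.inl ⟨by rw [← hr, h2'], hv ▸ hnull⟩
  · have h2' : π2 = 1 := h2
    exact Or.inr ⟨by rw [← hr, h2'], hv ▸ hnull⟩

lemma not_null_c (i : ℕ) : ¬ (c i).isNull := by simp [c, Val.isNull]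
lemma not_null_g : ¬ g.isNull := by simp [g, Val.isNull]

/-- `prec P T1 T3` for every `P`. -/
lemma prec_T1T3 (P : Set Pos) : prec P T1 T3 := by
  classical
  refine ⟨insert (fQ (c 0) (c 0)) {fM (c 0) (c 1)},
    insert (fQ (c 0) (c 0)) {fM (c 0) (c 1)} ∪
      {F | F = fQ (c 1) (mm 0) ∨ F = fM (mm 0) (mm 0)},
    (fun v => if v = 0 then c 0 else if v = 1 then c 0 else if v = 2 then c 1 else mm 0),
    (fun _ => mm 0), ?_, ?_, ?_, ?_, ?_, ?_, 1, hu_T3, trivial⟩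
  · exact (Set.finite_singleton _).insert _
  · intro F hF π hπ
    rcases Set.mem_insert_iff.1 hF with rfl | hF
    · rcases nullAt_fQ hπ with ⟨-, h⟩ | ⟨-, h⟩ <;> exact absurd h (not_null_c 0)
    · rw [Set.mem_singleton_iff] at hF
      subst hF
      rcases nullAt_fM hπ with ⟨-, h⟩ | ⟨-, h⟩ <;> exact absurd h (not_null_c _)
  · rw [t1_satAt_iff]
    intro h
    obtain ⟨w, hw, -⟩ := h (by constructor <;> simp)
    simp at hw
  · rw [t3_satAt_iff]
    intro hb
    simp at hb
  · rw [t1_chaseStep_iff]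
    refine ⟨?_, mm 0, trivial, ?_, by simp⟩
    · rw [t1_satAt_iff]
      intro h
      obtain ⟨w, hw, -⟩ := h (by constructor <;> simp)
      simp at hw
    · rintro ⟨F, hF, hv⟩
      rcases Set.mem_insert_iff.1 hF with rfl | hF
      · simp [fQ] at hv
      · rw [Set.mem_singleton_iff] at hF
        subst hF
        simp [fM] at hv
  · rw [t3_satAt_iff]
    push_neg
    constructor
    · simp [Set.mem_union, Set.mem_insert_iff, Set.mem_singleton_iff, Set.mem_setOf_eq]
    · intro hmem
      simp [Set.mem_union, Set.mem_insert_iff, Set.mem_singleton_iff,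
        Set.mem_setOf_eq] at hmem

/-- `prec P T3 T1` whenever `(Mrel,1) ∈ P`. -/
lemma prec_T3T1 {P : Set Pos} (hP : ((Mrel,1) : Pos) ∈ P) : prec P T3 T1 := by
  classical
  refine ⟨insert (fQ g g) {fM (c 0) (mm 0)},
    insert (fQ g g) {fM (c 0) (mm 0)} ∪ {F | F = fM g (mm 0)},
    (fun v => if v = 0 then c 0 else mm 0),
    (fun v => if v = 0 then g else if v = 1 then g else mm 0),
    ?_, ?_, ?_, ?_, ?_, ?_, 2, hu_T1, trivial⟩
  · exact (Set.finite_singleton _).insert _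
  · intro F hF π hπ
    rcases Set.mem_insert_iff.1 hF with rfl | hF
    · rcases nullAt_fQ hπ with ⟨-, h⟩ | ⟨-, h⟩ <;> exact absurd h not_null_g
    · rw [Set.mem_singleton_iff] at hF
      subst hF
      rcases nullAt_fM hπ with ⟨-, h⟩ | ⟨hπ1, -⟩
      · exact absurd h (not_null_c 0)
      · rw [hπ1]; exact hP
  · rw [t3_satAt_iff]
    intro h
    have := h (by simp)
    simp at this
  · rw [t1_satAt_iff]
    intro hb
    simp at hb
  · rw [t3_chaseStep_iff]
    refine ⟨?_, by simp⟩
    rw [t3_satAt_iff]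
    intro h
    have := h (by simp)
    simp at this
  · rw [t1_satAt_iff]
    push_neg
    refine ⟨⟨?_, ?_⟩, ?_⟩
    · simp [Set.mem_union, Set.mem_insert_iff, Set.mem_singleton_iff, Set.mem_setOf_eq]
    · simp [Set.mem_union, Set.mem_insert_iff, Set.mem_singleton_iff, Set.mem_setOf_eq]
    · intro w hw
      exfalso
      simp [Set.mem_union, Set.mem_insert_iff, Set.mem_singleton_iff,
        Set.mem_setOf_eq] at hw

/-- `prec P T1 T1` whenever `(Mrel,0), (Mrel,1) ∈ P`. -/
lemma prec_T1T1 {P : Set Pos} (h0 : ((Mrel,0) : Pos) ∈ P) (h1 : ((Mrel,1) : Pos) ∈ P) :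
    prec P T1 T1 := by
  classical
  refine ⟨insert (fQ (c 0) (c 0)) (insert (fM (c 0) (mm 0)) {fM (mm 0) (mm 1)}),
    insert (fQ (c 0) (c 0)) (insert (fM (c 0) (mm 0)) {fM (mm 0) (mm 1)}) ∪
      {F | F = fQ (mm 0) (mm 2) ∨ F = fM (mm 2) (mm 2)},
    (fun v => if v = 0 then c 0 else if v = 1 then c 0 else if v = 2 then mm 0 else mm 2),
    (fun v => if v = 0 then mm 0 else if v = 1 then mm 2 else mm 1),
    ?_, ?_, ?_, ?_, ?_, ?_, 2, hu_T1, trivial⟩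
  · exact ((Set.finite_singleton _).insert _).insert _
  · intro F hF π hπ
    rcases Set.mem_insert_iff.1 hF with rfl | hF
    · rcases nullAt_fQ hπ with ⟨-, h⟩ | ⟨-, h⟩ <;> exact absurd h (not_null_c 0)
    · rcases Set.mem_insert_iff.1 hF with rfl | hF
      · rcases nullAt_fM hπ with ⟨-, h⟩ | ⟨hπ1, -⟩
        · exact absurd h (not_null_c 0)
        · rw [hπ1]; exact h1
      · rw [Set.mem_singleton_iff] at hF
        subst hF
        rcases nullAt_fM hπ with ⟨hπ1, -⟩ | ⟨hπ1, -⟩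
        · rw [hπ1]; exact h0
        · rw [hπ1]; exact h1
  · rw [t1_satAt_iff]
    intro h
    obtain ⟨w, hw, -⟩ := h (by constructor <;> simp)
    simp at hw
  · rw [t1_satAt_iff]
    intro hb
    simp at hb
  · rw [t1_chaseStep_iff]
    refine ⟨?_, mm 2, trivial, ?_, by simp⟩
    · rw [t1_satAt_iff]
      intro h
      obtain ⟨w, hw, -⟩ := h (by constructor <;> simp)
      simp at hw
    · rintro ⟨F, hF, hv⟩
      rcases Set.mem_insert_iff.1 hF with rfl | hF
      · simp [fQ] at hv
      · rcases Set.mem_insert_iff.1 hF with rfl | hF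
        · simp [fM] at hv
        · rw [Set.mem_singleton_iff] at hF
          subst hF
          simp [fM] at hv
  · rw [t1_satAt_iff]
    push_neg
    refine ⟨⟨?_, ?_⟩, ?_⟩
    · simp [Set.mem_union, Set.mem_insert_iff, Set.mem_singleton_iff, Set.mem_setOf_eq]
    · simp [Set.mem_union, Set.mem_insert_iff, Set.mem_singleton_iff, Set.mem_setOf_eq]
    · intro w hw
      exfalso
      simp [Set.mem_union, Set.mem_insert_iff, Set.mem_singleton_iff,
        Set.mem_setOf_eq] at hw

/-- `prec P T3 T3` never holds. -/
lemma no_prec_T3T3 (P : Set Pos) : ¬ prec P T3 T3 := by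
  rintro ⟨I, J, a, b, -, -, -, hsB, hstep, hnsJB, -⟩
  rw [t3_chaseStep_iff] at hstep
  obtain ⟨-, hJ⟩ := hstep
  rw [t3_satAt_iff] at hsB
  rw [t3_satAt_iff] at hnsJB
  push_neg at hnsJB
  obtain ⟨hbJ, hhJ⟩ := hnsJB
  by_cases hbI : fM (b 0) (b 1) ∈ I
  · exact hhJ (hJ ▸ Set.mem_union_left _ (hsB hbI))
  · rw [hJ] at hbJ
    rcases (Set.mem_union _ _ _).1 hbJ with h | h
    · exact hbI h
    · have h' : fM (b 0) (b 1) = fM g (a 1) := h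
      rw [fM_inj] at h'
      refine hhJ ?_
      rw [hJ, h'.2]
      exact Set.mem_union_right _ rfl

end PayGo

namespace PayGo

def fmin : Constraint → Set Pos :=
  fun a => if a = T1 then T1.pos else if a = T3 then T3.pos else ∅

def Emin : Constraint → Constraint → Prop :=
  fun a b => (a = T1 ∧ (b = T1 ∨ b = T3)) ∨ (a = T3 ∧ b = T1)

def Rmin : RestrSys := ⟨Emin, fmin⟩

lemma fmin_T1 : fmin T1 = T1.pos := if_pos rfl

lemma fmin_T3 : fmin T3 = T3.pos := by
  unfold fmin
  rw [if_neg T1_ne_T3.symm, if_pos rfl]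

lemma fmin_mem {α : Constraint} (h : α ∈ Sk) : fmin α = α.pos := by
  rcases mem_Sk.1 h with rfl | rfl
  · exact fmin_T1
  · exact fmin_T3

lemma Rmin_valid : Rmin.valid Sk := by
  refine ⟨?_, ?_, ?_⟩
  · intro t β ht hβ hE
    have : Rmin.f β = β.pos := fmin_mem hβ
    rw [this]
    exact Set.inter_subset_right
  · intro e β he hβ hE
    exfalso
    rcases mem_Sk.1 he with h | h <;> simp [T1, T3] at h
  · intro α β hα hβ hprec
    rcases mem_Sk.1 hα with rfl | rfl <;> rcases mem_Sk.1 hβ with rfl | rfl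
    · exact Or.inl ⟨rfl, Or.inl rfl⟩
    · exact Or.inl ⟨rfl, Or.inr rfl⟩
    · exact Or.inr ⟨rfl, rfl⟩
    · exact absurd hprec (no_prec_T3T3 _)

lemma Rmin_minimal : ∀ R', R'.valid Sk → Rmin.le R' := by
  intro R' hR'
  obtain ⟨hc1, hc2, hc3⟩ := hR'
  have hE13 : R'.E T1 T3 := hc3 T1 T3 T1_mem_Sk T3_mem_Sk (prec_T1T3 _)
  have hsub13 := hc1 t1 T3 T1_mem_Sk T3_mem_Sk hE13
  have hfT3M1 : ((Mrel,1) : Pos) ∈ R'.f T3 := hsub13 ⟨affCl_t1_M1 _, pos_T3_M1⟩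
  have hfT3M0 : ((Mrel,0) : Pos) ∈ R'.f T3 := hsub13 ⟨affCl_t1_M0 _, pos_T3_M0⟩
  have hE31 : R'.E T3 T1 := hc3 T3 T1 T3_mem_Sk T1_mem_Sk (prec_T3T1 hfT3M1)
  have hsub31 := hc1 t3 T1 T3_mem_Sk T1_mem_Sk hE31
  have hfT1M0 : ((Mrel,0) : Pos) ∈ R'.f T1 := hsub31 ⟨affCl_t3_M0 _, pos_T1_M0⟩
  have hfT1M1 : ((Mrel,1) : Pos) ∈ R'.f T1 := hsub31 ⟨affCl_t3_M1 hfT3M1, pos_T1_M1⟩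
  have hE11 : R'.E T1 T1 := hc3 T1 T1 T1_mem_Sk T1_mem_Sk (prec_T1T1 hfT1M0 hfT1M1)
  have hsub11 := hc1 t1 T1 T1_mem_Sk T1_mem_Sk hE11
  have hfT1Q0 : ((Qr,0) : Pos) ∈ R'.f T1 := hsub11 ⟨affCl_t1_Q0 hfT1M1, pos_T1_Q0⟩
  have hfT1Q1 : ((Qr,1) : Pos) ∈ R'.f T1 := hsub11 ⟨affCl_t1_Q1 _, pos_T1_Q1⟩
  constructor
  · rintro a b (⟨rfl, rfl | rfl⟩ | ⟨rfl, rfl⟩)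
    · exact hE11
    · exact hE13
    · exact hE31
  · intro a
    show fmin a ⊆ R'.f a
    unfold fmin
    by_cases h1 : a = T1
    · subst h1
      rw [if_pos rfl]
      intro π hπ
      have := pos_T1_sub hπ
      rcases this with h | h | h | h
      · rw [h]; exact hfT1Q0
      · rw [h]; exact hfT1Q1
      · rw [h]; exact hfT1M0
      · rw [h]; exact hfT1M1
    · rw [if_neg h1]
      by_cases h3 : a = T3
      · subst h3
        rw [if_pos rfl]
        intro π hπ
        rcases pos_T3_sub hπ with h | h
        · rw [h]; exact hfT3M0
        · rw [h]; exact hfT3M1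
      · rw [if_neg h3]
        exact Set.empty_subset _

lemma Rmin_isMinimal : IsMinimalRS Sk Rmin := ⟨Rmin_valid, Rmin_minimal⟩

lemma rtg_Sk : ∀ α ∈ Sk, ∀ β ∈ Sk, Relation.ReflTransGen (edgeOn Sk Emin) α β := by
  intro α hα β hβ
  rcases mem_Sk.1 hα with rfl | rfl <;> rcases mem_Sk.1 hβ with rfl | rfl
  · exact Relation.ReflTransGen.refl
  · exact Relation.ReflTransGen.single ⟨T1_mem_Sk, T3_mem_Sk, Or.inl ⟨rfl, Or.inr rfl⟩⟩
  · exact Relation.ReflTransGen.single ⟨T3_mem_Sk, T1_mem_Sk, Or.inr ⟨rfl, rfl⟩⟩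
  · exact Relation.ReflTransGen.refl

lemma sccOf_eq {α : Constraint} (hα : α ∈ Sk) : sccOf Sk Emin α = Sk := by
  ext β
  simp only [sccOf, Set.mem_setOf_eq]
  constructor
  · exact fun h => h.1
  · intro hβ
    exact ⟨hβ, rtg_Sk α hα β hβ, rtg_Sk β hβ α hα⟩

lemma SCCs_eq : SCCs Sk Emin = {Sk} := by
  ext C
  simp only [SCCs, Set.mem_setOf_eq, Set.mem_singleton_iff]
  constructor
  · rintro ⟨α, hα, -, rfl⟩
    exact sccOf_eq hα
  · rintro rfl
    exact ⟨T1, T1_mem_Sk,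
      Relation.TransGen.single ⟨T1_mem_Sk, T1_mem_Sk, Or.inl ⟨rfl, Or.inl rfl⟩⟩,
      (sccOf_eq T1_mem_Sk).symm⟩

lemma partMem_Sk : PartMem Sk Sk :=
  PartMem.base Sk Rmin Rmin_isMinimal SCCs_eq

lemma not_IR_Sk : ¬ InductivelyRestricted Sk := fun h =>
  not_safe_of_mem T1_mem_Sk (h Sk partMem_Sk)

end PayGo

/-- Proposition 2. For each `k ≥ 1` there are a constraint set
`Σ_k` and an instance `I_k` such that (a) both `Σ_k` and the subset of constraints
of `Σ_k` that are not `(I_k,Σ_k)`-irrelevant are not inductively restricted, and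
(b) every chase sequence for `I_k` with `Σ_k` is `(k-1)`-cyclic but not `k`-cyclic
(and at least one complete chase sequence exists). -/
theorem pay_as_you_go (k : ℕ) (hk : 1 ≤ k) :
    ∃ (Sk : Set Constraint) (Ik : Set Fact), Sk.Finite ∧ Ik.Finite ∧
      ¬ InductivelyRestricted Sk ∧
      ¬ InductivelyRestricted {α | α ∈ Sk ∧ ¬ Irrelevant Ik Sk α} ∧
      (∃ (D : ChaseData) (r : ℕ), D.inst 0 = Ik ∧ D.okUpTo Sk r ∧
        ∀ α ∈ Sk, α.holds (D.inst r)) ∧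
      (∀ (D : ChaseData) (r : ℕ), D.inst 0 = Ik → D.okUpTo Sk r →
        (∀ α ∈ Sk, α.holds (D.inst r)) →
        kCyclic (D.mgE r) (k-1) ∧ ¬ kCyclic (D.mgE r) k) := by
  refine ⟨PayGo.Sk, PayGo.Ik k, PayGo.Sk_finite, PayGo.Ik_finite k,
    PayGo.not_IR_Sk, ?_, PayGo.cD_exists k hk,
    fun D r h1 h2 h3 => PayGo.forall_chase hk D r h1 h2 h3⟩
  rw [PayGo.notIrr_set k hk]
  exact PayGo.not_IR_Sk

end StopChase
end

section
/- Let S be a chase sequence with prefixes S_i, and suppose the chase step I_i →_{φ_i,ā_i} I_{i+1} applies a TGD φ_i, where b ∈ ā_i is a labeled null and c is a labeled null newly created in this step. Then the depth of any node of the monitor graph G_{S_{i+1}} whose first component is b is strictly smaller than the depth of any node of G_{S_{i+1}} whose first component is c. -/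
set_option maxHeartbeats 1000000

namespace StopChase

/-- Proposition 3, fourth bullet. If the chase step
`I_i →_{φ_i,ā_i} I_{i+1}` applies a TGD `φ_i`, `b ∈ ā_i` is a labeled null and `c`
is a labeled null newly created in this step, then the depth of any node of
`G_{S_{i+1}}` whose first component is `b` is strictly smaller than the depth of
any node of `G_{S_{i+1}}` whose first component is `c`. -/
theorem old_null_shallower_than_new_null (D : ChaseData) (i : ℕ) (t : TGD)
    (hok : ∀ n ≤ i, (D.cns n).chaseStep (D.asg n) (D.inst n) (D.inst (n+1)))
    (hfresh : D.fresh (i+1)) (ht : D.cns i = .tgd t)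
    (b : Val) (hb : b.isNull) (hbarg : ∃ v ∈ t.uniVars, D.asg i v = b)
    (c : Val) (hc : c ∈ newNulls (D.inst i) (D.inst (i+1))) :
    ∀ (πb πc : Set Pos) (db dc : ℕ),
      (b, πb) ∈ D.mgV (i+1) → (c, πc) ∈ D.mgV (i+1) →
      HasDepth (D.mgE (i+1)) (b, πb) db → HasDepth (D.mgE (i+1)) (c, πc) dc →
      db < dc := by
  intro πb πc db dc hbv hcv hdb hdc
  -- the chase step at i
  have hstep := hok i le_rfl
  rw [ht] at hstep
  obtain ⟨hnsat, -⟩ := hstep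
  have hbody : bodyHolds (D.inst i) t.body (D.asg i) := by
    by_contra h
    exact hnsat (fun hb' => absurd hb' h)
  -- b occurs in the active domain of I_i
  obtain ⟨v, hv, hvb⟩ := hbarg
  obtain ⟨A, hA, hvA⟩ := hv
  have hbadom : b ∈ adom (D.inst i) := by
    refine ⟨A.inst (D.asg i), hbody A hA, ?_⟩
    have : Term.eval (D.asg i) (Term.var v) ∈ A.args.map (Term.eval (D.asg i)) :=
      List.mem_map_of_mem hvA
    simpa [Atom.inst, Term.eval, hvb] using this
  -- c does not occur in any earlier instance
  obtain ⟨hcnull, hcadom, hcnot⟩ := hc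
  have hcfresh : ∀ j ≤ i, c ∉ adom (D.inst j) :=
    hfresh i (Nat.lt_succ_self i) c hcnull hcadom hcnot
  -- (b,πb) ∈ mgV i
  have hbV : (b, πb) ∈ D.mgV i := by
    rcases hbv with h | h
    · exact h
    · obtain ⟨n, hn, heq⟩ := h
      have hnb : b = n := congrArg Prod.fst heq
      exact absurd hbadom (hnb ▸ hn.2.2)
  -- (c,πc) ∈ mgNew i
  have hcVnot : ∀ j, j ≤ i → ∀ π, (c, π) ∉ D.mgV j := by
    intro j
    induction j with
    | zero => intro _ π h; exact h.elim
    | succ j ih =>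
      intro hj π h
      rcases h with h | h
      · exact ih (Nat.le_of_succ_le hj) π h
      · obtain ⟨n, hn, heq⟩ := h
        have hnc : c = n := congrArg Prod.fst heq
        exact hcfresh (j+1) hj (hnc ▸ hn.2.1)
  have hcN : (c, πc) ∈ D.mgNew i := by
    rcases hcv with h | h
    · exact absurd h (hcVnot i le_rfl πc)
    · exact h
  -- the monitor graph edge from (b,πb) to (c,πc)
  set e : MEdge := ⟨(b, πb), D.cns i, instBodyPos (D.cns i) (D.asg i) b, (c, πc)⟩
    with he
  have heE : e ∈ D.mgE (i+1) := Or.inr ⟨hbV, hcN, rfl, rfl⟩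
  -- compare depths
  obtain ⟨hdc1, -⟩ := hdc
  obtain ⟨hdb1, hdb2⟩ := hdb
  cases hdc1 with
  | intro _ _ f hf hsrc =>
    have h1 : f e < dc := hf e heE rfl
    have h2 : DepthLe (D.mgE (i+1)) (b, πb) (f e) := hsrc e heE rfl
    have h3 : db ≤ f e := by
      by_contra h
      exact hdb2 (f e) (lt_of_not_ge h) h2
    omega

end StopChase
end
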